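/- arXiv:1601.05034 — 12 statements merged into one kernel-verified Lean document; each statement's English description precedes it below -/
import Mathlib

section
/- Let R be a finite commutative ring with nonzero identity, let n ≥ 1, and let a = (a_1,…,a_n) ∈ R^n be a vertex of TD(R,n) such that a_i is invertible in R for some i. Then the degree of a in TD(R,n) equals |R|^{n-1} − 1 if ‖a‖ ≠ 0, and equals |R|^{n-1} − 2 if ‖a‖ = 0. -/
open SimpleGraph

/-- The total dot product graph `TD(R,n)`: vertices are the nonzero vectors of `R^n`,
and two distinct vertices are adjacent iff their dot product is `0`. -/
def TD (R : Type*) [CommRing R] (n : ℕ) :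
    SimpleGraph {x : Fin n → R // x ≠ 0} where
  Adj a b := a ≠ b ∧ ∑ i, a.1 i * b.1 i = 0
  symm := by
    constructor
    intro a b ⟨hne, h⟩
    exact ⟨hne.symm, by simpa [mul_comm] using h⟩
  loopless := by
    constructor
    intro a ⟨hne, _⟩
    exact hne rfl

/-- if some coordinate of a vertex `a` of `TD(R,n)` is invertible, then the
degree of `a` is `|R|^(n-1) - 1` when `‖a‖ ≠ 0`, and `|R|^(n-1) - 2` when `‖a‖ = 0`. -/
theorem stmt0 (R : Type*) [CommRing R] [Fintype R] [Nontrivial R]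
    (n : ℕ) (hn : 1 ≤ n) (a : {x : Fin n → R // x ≠ 0})
    (ha : ∃ i, IsUnit (a.1 i)) :
    (∑ i, a.1 i ^ 2 ≠ 0 →
      Nat.card ((TD R n).neighborSet a) = Fintype.card R ^ (n - 1) - 1) ∧
    (∑ i, a.1 i ^ 2 = 0 →
      Nat.card ((TD R n).neighborSet a) = Fintype.card R ^ (n - 1) - 2) := by
  classical
  obtain ⟨i, hu⟩ := ha
  set c := a.1 with hc
  -- the dot-product-with-`c` additive homomorphism
  let f : (Fin n → R) →+ R :=
    { toFun := fun x => ∑ j, c j * x j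
      map_zero' := by simp
      map_add' := by intro x y; simp [mul_add, Finset.sum_add_distrib] }
  have hfapp : ∀ x, f x = ∑ j, c j * x j := fun x => rfl
  have hsurj : Function.Surjective f := by
    intro r
    obtain ⟨u, hu'⟩ := hu
    refine ⟨Pi.single i ((↑u⁻¹ : R) * r), ?_⟩
    rw [hfapp, Finset.sum_eq_single i]
    · rw [Pi.single_eq_same, ← hu', ← mul_assoc]
      simp
    · intro b _ hb
      rw [Pi.single_eq_of_ne hb, mul_zero]
    · intro h; exact absurd (Finset.mem_univ i) h
  have hcR : 0 < Fintype.card R := Fintype.card_pos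
  have hker : Nat.card f.ker = Fintype.card R ^ (n - 1) := by
    have h1 := AddSubgroup.card_eq_card_quotient_mul_card_addSubgroup f.ker
    have h2 : Nat.card ((Fin n → R) ⧸ f.ker) = Fintype.card R :=
      (Nat.card_congr (QuotientAddGroup.quotientKerEquivOfSurjective f hsurj).toEquiv).trans
        (Nat.card_eq_fintype_card)
    have h3 : Nat.card (Fin n → R) = Fintype.card R ^ n := by
      simp [Nat.card_eq_fintype_card]
    rw [h2, h3] at h1
    have hpow : Fintype.card R ^ n = Fintype.card R * Fintype.card R ^ (n - 1) := by
      conv_lhs => rw [← Nat.succ_pred_eq_of_pos hn]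
      rw [pow_succ, mul_comm, Nat.pred_eq_sub_one]
    rw [hpow] at h1
    exact (Nat.eq_of_mul_eq_mul_left hcR h1.symm)
  set S : Finset (Fin n → R) := Finset.univ.filter (fun x => ∑ j, c j * x j = 0) with hSdef
  have hS : S.card = Fintype.card R ^ (n - 1) := by
    rw [← hker, Nat.card_eq_fintype_card]
    rw [Fintype.card_congr (Equiv.subtypeEquivRight (fun x => f.mem_ker))]
    rw [Fintype.card_subtype]
    rfl
  -- equivalence between the neighbor set and a subtype of vectors
  have e : (TD R n).neighborSet a ≃ {x : Fin n → R // (∑ j, c j * x j = 0) ∧ x ≠ 0 ∧ x ≠ c} :=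
    { toFun := fun b => ⟨b.1.1, b.2.2, b.1.2, fun h => b.2.1 (Subtype.ext h.symm)⟩
      invFun := fun x => ⟨⟨x.1, x.2.2.1⟩, fun h => x.2.2.2 (congrArg Subtype.val h).symm, x.2.1⟩
      left_inv := fun b => rfl
      right_inv := fun x => rfl }
  have hcard : Nat.card ((TD R n).neighborSet a)
      = (Finset.univ.filter (fun x : Fin n → R => (∑ j, c j * x j = 0) ∧ x ≠ 0 ∧ x ≠ c)).card := by
    rw [Nat.card_congr e, Nat.card_eq_fintype_card, Fintype.card_subtype]
  have hfilter : Finset.univ.filter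
      (fun x : Fin n → R => (∑ j, c j * x j = 0) ∧ x ≠ 0 ∧ x ≠ c) = (S.erase 0).erase c := by
    ext x
    simp only [hSdef, Finset.mem_filter, Finset.mem_erase, Finset.mem_univ, true_and]
    tauto
  have h0S : (0 : Fin n → R) ∈ S := by simp [hSdef]
  have hc0 : c ≠ 0 := a.2
  have hcc : ∑ j, c j * c j = ∑ j, c j ^ 2 := by simp [sq]
  constructor
  · intro hne
    have hcS : c ∉ S := by
      simp only [hSdef, Finset.mem_filter, Finset.mem_univ, true_and]
      rw [hcc]; exact hne
    rw [hcard, hfilter, Finset.erase_eq_of_notMem (fun h => hcS (Finset.mem_of_mem_erase h)),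
      Finset.card_erase_of_mem h0S, hS]
  · intro heq
    have hcS : c ∈ S := by
      simp only [hSdef, Finset.mem_filter, Finset.mem_univ, true_and]
      rw [hcc]; exact heq
    have hc1 : c ∈ S.erase 0 := Finset.mem_erase.mpr ⟨hc0, hcS⟩
    rw [hcard, hfilter, Finset.card_erase_of_mem hc1, Finset.card_erase_of_mem h0S, hS]
    rw [Nat.sub_sub]
end

section
/- Let F be a finite field with q elements such that q ≡ 3 (mod 4). Then TD(F,2) is a regular graph of valency q − 1, i.e. every vertex of TD(F,2) has degree q − 1. -/
open SimpleGraph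

lemma sq_add_sq_eq_zero {F : Type*} [Field F] [Fintype F]
    (hq : Fintype.card F % 4 = 3) (a b : F) (h : a * a + b * b = 0) :
    a = 0 ∧ b = 0 := by
  have hns : ¬ IsSquare (-1 : F) := by
    rw [FiniteField.isSquare_neg_one_iff]; omega
  by_cases hb : b = 0
  · subst hb
    simp only [mul_zero, add_zero] at h
    exact ⟨mul_self_eq_zero.mp h, rfl⟩
  · exfalso
    apply hns
    refine ⟨a * b⁻¹, ?_⟩
    field_simp
    linear_combination -h

/-- if `F` is a finite field with `q ≡ 3 (mod 4)` elements, then `TD(F,2)` is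
a regular graph of valency `q - 1`. -/
theorem stmt1 (F : Type*) [Field F] [Fintype F]
    (hq : Fintype.card F % 4 = 3)
    (v : {x : Fin 2 → F // x ≠ 0}) :
    Nat.card ((TD F 2).neighborSet v) = Fintype.card F - 1 := by
  classical
  obtain ⟨v, hv⟩ := v
  have hvv : v 0 * v 0 + v 1 * v 1 ≠ 0 := by
    intro h
    obtain ⟨h0, h1⟩ := sq_add_sq_eq_zero hq _ _ h
    apply hv
    funext i
    fin_cases i <;> simpa
  have hv01 : v 0 ≠ 0 ∨ v 1 ≠ 0 := by
    by_contra h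
    push_neg at h
    exact hvv (by rw [h.1, h.2]; ring)
  have hnz : ∀ t : F, t ≠ 0 → (![-t * v 1, t * v 0] : Fin 2 → F) ≠ 0 := by
    intro t ht h
    have h0 : -t * v 1 = 0 := congrFun h 0
    have h1 : t * v 0 = 0 := congrFun h 1
    have hv1 : v 1 = 0 := by
      rcases mul_eq_zero.mp h0 with h' | h'
      · exact absurd (neg_eq_zero.mp h') ht
      · exact h'
    have hv0 : v 0 = 0 := by
      rcases mul_eq_zero.mp h1 with h' | h' <;> [exact absurd h' ht; exact h']
    exact hvv (by rw [hv0, hv1]; ring)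
  have hmem : ∀ t : F, ∀ ht : t ≠ 0,
      (⟨![-t * v 1, t * v 0], hnz t ht⟩ : {x : Fin 2 → F // x ≠ 0}) ∈
        (TD F 2).neighborSet ⟨v, hv⟩ := by
    intro t ht
    refine ⟨?_, ?_⟩
    · intro h
      have h' : v = ![-t * v 1, t * v 0] := congrArg Subtype.val h
      have h0 : v 0 = -t * v 1 := by simpa using congrFun h' 0
      have h1 : v 1 = t * v 0 := by simpa using congrFun h' 1
      exact hvv (by linear_combination v 0 * h0 + v 1 * h1)
    · simp [Fin.sum_univ_two]
      ring
  let f : {t : F // t ≠ 0} → ((TD F 2).neighborSet ⟨v, hv⟩) :=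
    fun t => ⟨⟨![-t.1 * v 1, t.1 * v 0], hnz t.1 t.2⟩, hmem t.1 t.2⟩
  have hbij : Function.Bijective f := by
    constructor
    · intro t s h
      have h' : (![-t.1 * v 1, t.1 * v 0] : Fin 2 → F) = ![-s.1 * v 1, s.1 * v 0] :=
        congrArg Subtype.val (congrArg Subtype.val h)
      have h0 : -t.1 * v 1 = -s.1 * v 1 := congrFun h' 0
      have h1 : t.1 * v 0 = s.1 * v 0 := congrFun h' 1
      rcases hv01 with hne | hne
      · exact Subtype.ext (mul_right_cancel₀ hne h1)
      · refine Subtype.ext ?_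
        have := mul_right_cancel₀ hne h0
        simpa using this
    · rintro ⟨⟨w, hw⟩, hadj⟩
      obtain ⟨hne, hdot⟩ := hadj
      rw [Fin.sum_univ_two] at hdot
      have hdot' : v 0 * w 0 + v 1 * w 1 = 0 := hdot
      set t : F := (w 1 * v 0 - w 0 * v 1) / (v 0 * v 0 + v 1 * v 1) with ht
      have hw1 : w 1 = t * v 0 := by
        rw [ht, div_mul_eq_mul_div, eq_div_iff hvv]
        linear_combination (v 1) * hdot'
      have hw0 : w 0 = -t * v 1 := by
        rw [ht, neg_mul, div_mul_eq_mul_div, ← neg_div, eq_div_iff hvv]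
        linear_combination (v 0) * hdot'
      have htne : t ≠ 0 := by
        intro h
        apply hw
        funext i
        fin_cases i
        · simpa [h] using hw0
        · simpa [h] using hw1
      refine ⟨⟨t, htne⟩, ?_⟩
      apply Subtype.ext
      apply Subtype.ext
      funext i
      fin_cases i
      · simpa [f] using hw0.symm
      · simpa [f] using hw1.symm
  rw [← Nat.card_eq_of_bijective f hbij, Nat.card_eq_fintype_card,
    Fintype.card_subtype_compl, Fintype.card_subtype_eq]
end

section
/- Let F be a finite field with q elements such that the equation x² + y² = 0 has only the trivial solution x = y = 0 in F. Then TD(F,2) is disconnected and has exactly (q+1)/2 connected components, each of which has exactly 2(q−1) vertices. -/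
open SimpleGraph

namespace TDaux

variable {F : Type*} [Field F]

/-- rotate by 90 degrees -/
def p (v : Fin 2 → F) : Fin 2 → F := ![-(v 1), v 0]

@[simp] lemma p0 (v : Fin 2 → F) : p v 0 = -(v 1) := rfl
@[simp] lemma p1 (v : Fin 2 → F) : p v 1 = v 0 := rfl

lemma vec_ne_zero {v : Fin 2 → F} (hv : v ≠ 0) : v 0 ≠ 0 ∨ v 1 ≠ 0 := by
  by_contra hc
  push_neg at hc
  exact hv (by funext i; fin_cases i <;> simp [hc.1, hc.2])

lemma p_ne_zero {v : Fin 2 → F} (hv : v ≠ 0) : p v ≠ 0 := by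
  intro hp
  apply hv
  funext i
  have h0 := congrFun hp 0
  have h1 := congrFun hp 1
  simp at h0 h1
  fin_cases i <;> simp [h0, h1]

lemma p_smul (c : F) (v : Fin 2 → F) : p (c • v) = c • p v := by
  funext i; fin_cases i <;> simp [p, mul_comm]

lemma p_p (v : Fin 2 → F) : p (p v) = -v := by
  funext i; fin_cases i <;> simp [p]

lemma dot_p (v : Fin 2 → F) : v 0 * p v 0 + v 1 * p v 1 = 0 := by
  simp only [p0, p1]; ring

section aniso
variable (h : ∀ x y : F, x ^ 2 + y ^ 2 = 0 → x = 0 ∧ y = 0)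
include h

lemma aniso {v : Fin 2 → F} (hv : v ≠ 0) : v 0 * v 0 + v 1 * v 1 ≠ 0 := by
  intro hd
  have := h (v 0) (v 1) (by rw [sq, sq]; exact hd)
  rcases vec_ne_zero hv with h0 | h0 <;> [exact h0 this.1; exact h0 this.2]

lemma cross {v : Fin 2 → F} (hv : v ≠ 0) {c d : F} (hcd : c • v = d • p v) :
    c = 0 ∧ d = 0 := by
  have h0 := congrFun hcd 0
  have h1 := congrFun hcd 1
  simp at h0 h1
  have hc : c * (v 0 * v 0 + v 1 * v 1) = 0 := by
    linear_combination v 0 * h0 + v 1 * h1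
  have hc0 : c = 0 := by
    rcases mul_eq_zero.1 hc with h' | h'
    · exact h'
    · exact absurd h' (aniso h hv)
  refine ⟨hc0, ?_⟩
  rw [hc0, zero_smul] at hcd
  by_contra hd
  exact p_ne_zero hv (by
    have := hcd.symm
    rwa [smul_eq_zero, or_iff_right hd] at this)
end aniso

lemma orth {v w : Fin 2 → F} (hv : v ≠ 0)
    (hd : v 0 * w 0 + v 1 * w 1 = 0) : ∃ c : F, w = c • p v := by
  by_cases ha : v 0 = 0
  · rcases vec_ne_zero hv with h0 | hb
    · exact absurd ha h0
    · refine ⟨-(w 0) / v 1, ?_⟩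
      have hw1 : w 1 = 0 := by
        rw [ha, zero_mul, zero_add] at hd
        exact (mul_eq_zero.1 hd).resolve_left hb
      funext i
      fin_cases i <;> simp [ha, hw1]
      field_simp
  · refine ⟨w 1 / v 0, ?_⟩
    funext i
    fin_cases i <;> simp
    · field_simp
      linear_combination hd
    · field_simp

/-- the relation describing components -/
def S (v w : Fin 2 → F) : Prop := ∃ c : F, c ≠ 0 ∧ (w = c • v ∨ w = c • p v)

lemma S_refl (v : Fin 2 → F) : S v v := ⟨1, one_ne_zero, Or.inl (one_smul _ _).symm⟩

lemma S_symm {v w : Fin 2 → F} (hS : S v w) : S w v := by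
  obtain ⟨c, hc, hcase | hcase⟩ := hS
  · exact ⟨c⁻¹, inv_ne_zero hc, Or.inl (by rw [hcase, smul_smul, inv_mul_cancel₀ hc, one_smul])⟩
  · refine ⟨-c⁻¹, neg_ne_zero.2 (inv_ne_zero hc), Or.inr ?_⟩
    rw [hcase, p_smul, p_p, smul_smul]
    rw [neg_mul, inv_mul_cancel₀ hc]
    simp

section closure
variable (h : ∀ x y : F, x ^ 2 + y ^ 2 = 0 → x = 0 ∧ y = 0)
include h

omit h in
lemma S_closed {v w u : Fin 2 → F} (hw : w ≠ 0) (hu : u ≠ 0)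
    (hS : S v w) (hd : w 0 * u 0 + w 1 * u 1 = 0) : S v u := by
  obtain ⟨d, hdw⟩ := orth hw hd
  have hd0 : d ≠ 0 := by
    rintro rfl
    rw [zero_smul] at hdw
    exact hu hdw
  obtain ⟨c, hc, hcase | hcase⟩ := hS
  · refine ⟨d * c, mul_ne_zero hd0 hc, Or.inr ?_⟩
    rw [hdw, hcase, p_smul, smul_smul]
  · refine ⟨-(d * c), neg_ne_zero.2 (mul_ne_zero hd0 hc), Or.inl ?_⟩
    rw [hdw, hcase, p_smul, p_p]
    module
end closure

end TDaux

open TDaux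

namespace TDaux

variable {F : Type*} [Field F]

lemma adj_iff (a b : {x : Fin 2 → F // x ≠ 0}) :
    (TD F 2).Adj a b ↔ a.1 ≠ b.1 ∧ a.1 0 * b.1 0 + a.1 1 * b.1 1 = 0 := by
  change (a ≠ b ∧ ∑ i, a.1 i * b.1 i = 0) ↔ _
  rw [Fin.sum_univ_two, Subtype.ext_iff.ne]

section withh
variable (h : ∀ x y : F, x ^ 2 + y ^ 2 = 0 → x = 0 ∧ y = 0)
include h

lemma reach_iff (a b : {x : Fin 2 → F // x ≠ 0}) :
    (TD F 2).Reachable a b ↔ S a.1 b.1 := by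
  constructor
  · rintro ⟨w⟩
    induction w with
    | nil => exact S_refl _
    | @cons x y z hadj wlk ih =>
      rw [adj_iff] at hadj
      have hd : y.1 0 * x.1 0 + y.1 1 * x.1 1 = 0 := by linear_combination hadj.2
      exact S_symm (S_closed y.2 x.2 (S_symm ih) hd)
  · rintro ⟨c, hc, hcase | hcase⟩
    · -- b = c • a : two-step path through p a
      have hpa : p a.1 ≠ 0 := p_ne_zero a.2
      have h1 : (TD F 2).Adj a ⟨p a.1, hpa⟩ := by
        rw [adj_iff]
        refine ⟨?_, dot_p a.1⟩
        intro heq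
        have : (1 : F) • a.1 = (1 : F) • p a.1 := by
          rw [one_smul, one_smul]; exact heq
        exact one_ne_zero ((cross h a.2 this).1)
      have h2 : (TD F 2).Adj ⟨p a.1, hpa⟩ b := by
        rw [adj_iff]
        constructor
        · intro heq
          have : c • a.1 = (1 : F) • p a.1 := by
            rw [one_smul, ← hcase]; exact heq.symm
          exact one_ne_zero ((cross h a.2 this).2)
        · rw [hcase]
          simp only [Pi.smul_apply, smul_eq_mul, p0, p1]
          ring
      exact (h1.reachable).trans h2.reachable
    · -- b = c • p a : directly adjacent
      have h1 : (TD F 2).Adj a b := by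
        rw [adj_iff]
        constructor
        · intro heq
          have : (1 : F) • a.1 = c • p a.1 := by rw [one_smul, ← hcase, heq]
          exact one_ne_zero ((cross h a.2 this).1)
        · rw [hcase]
          simp only [Pi.smul_apply, smul_eq_mul, p0, p1]
          ring
      exact h1.reachable

end withh

end TDaux

/-- if `x² + y² = 0` has only the trivial solution in a finite field `F` with
`q` elements, then `TD(F,2)` is disconnected with exactly `(q+1)/2` connected components,
each of which has exactly `2(q-1)` vertices. -/
theorem stmt3 (F : Type*) [Field F] [Fintype F]
    (h : ∀ x y : F, x ^ 2 + y ^ 2 = 0 → x = 0 ∧ y = 0) :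
    ¬ (TD F 2).Connected ∧
    2 * Nat.card ((TD F 2).ConnectedComponent) = Fintype.card F + 1 ∧
    ∀ c : (TD F 2).ConnectedComponent, c.supp.ncard = 2 * (Fintype.card F - 1) := by
  classical
  set q := Fintype.card F with hq
  have hone : (1 : F) ≠ 0 := one_ne_zero
  -- two example vertices
  have hva : (![1, 0] : Fin 2 → F) ≠ 0 := by
    intro hv; exact hone (by simpa using congrFun hv 0)
  have hvb : (![1, 1] : Fin 2 → F) ≠ 0 := by
    intro hv; exact hone (by simpa using congrFun hv 0)
  -- Part 1 : disconnected
  have part1 : ¬ (TD F 2).Connected := by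
    intro hconn
    have hr := hconn.preconnected ⟨![1,0], hva⟩ ⟨![1,1], hvb⟩
    rw [reach_iff h] at hr
    obtain ⟨c, hc, hcase | hcase⟩ := hr
    · have := congrFun hcase 1
      simp at this
    · have := congrFun hcase 0
      simp [p] at this
  -- Part 3 : size of each component
  have part3 : ∀ c : (TD F 2).ConnectedComponent, c.supp.ncard = 2 * (q - 1) := by
    intro c
    obtain ⟨v, hv⟩ := c.exists_rep
    subst hv
    show ((TD F 2).connectedComponentMk v).supp.ncard = 2 * (q - 1)
    have hpv : p v.1 ≠ 0 := p_ne_zero v.2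
    set f : Fˣ × Bool → {x : Fin 2 → F // x ≠ 0} := fun u =>
      ⟨(u.1 : F) • (bif u.2 then v.1 else p v.1),
        smul_ne_zero u.1.ne_zero (by cases u.2 <;> simpa using (by first | exact v.2 | exact hpv))⟩
      with hf
    have hinj : Function.Injective f := by
      rintro ⟨c₁, b₁⟩ ⟨c₂, b₂⟩ heq
      have heq' : (c₁ : F) • (bif b₁ then v.1 else p v.1)
          = (c₂ : F) • (bif b₂ then v.1 else p v.1) := congrArg Subtype.val heq
      cases b₁ <;> cases b₂ <;> simp only [Bool.cond_true, Bool.cond_false] at heq'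
      · have : (c₁ : F) = c₂ := smul_left_injective F hpv heq'
        simp [Units.ext_iff, this]
      · exact absurd ((cross h v.2 heq'.symm).1) c₂.ne_zero
      · exact absurd ((cross h v.2 heq').1) c₁.ne_zero
      · have : (c₁ : F) = c₂ := smul_left_injective F v.2 heq'
        simp [Units.ext_iff, this]
    have hrange : Set.range f = ((TD F 2).connectedComponentMk v).supp := by
      ext x
      rw [SimpleGraph.ConnectedComponent.mem_supp_iff, SimpleGraph.ConnectedComponent.eq,
        reach_iff h]
      constructor
      · rintro ⟨⟨c₁, b₁⟩, rfl⟩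
        apply S_symm
        cases b₁
        · exact ⟨c₁, c₁.ne_zero, Or.inr rfl⟩
        · exact ⟨c₁, c₁.ne_zero, Or.inl rfl⟩
      · rintro hS
        obtain ⟨c₁, hc₁, hcase | hcase⟩ := S_symm hS
        · exact ⟨(Units.mk0 c₁ hc₁, true), Subtype.ext hcase.symm⟩
        · exact ⟨(Units.mk0 c₁ hc₁, false), Subtype.ext hcase.symm⟩
    calc ((TD F 2).connectedComponentMk v).supp.ncard
        = (Set.range f).ncard := by rw [hrange]
      _ = Nat.card (Set.range f) := (Nat.card_coe_set_eq _).symm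
      _ = Nat.card (Fˣ × Bool) := Nat.card_range_of_injective hinj
      _ = Nat.card Fˣ * Nat.card Bool := Nat.card_prod _ _
      _ = (q - 1) * 2 := by rw [Nat.card_units, Nat.card_eq_fintype_card, hq]; simp
      _ = 2 * (q - 1) := mul_comm _ _
  refine ⟨part1, ?_, part3⟩
  -- Part 2 : number of components
  set V := {x : Fin 2 → F // x ≠ 0}
  set CC := (TD F 2).ConnectedComponent
  have : Finite CC := Quot.finite _
  have : Fintype CC := Fintype.ofFinite CC
  have e : V ≃ Σ c : CC, c.supp :=
    { toFun := fun x => ⟨(TD F 2).connectedComponentMk x, x, rfl⟩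
      invFun := fun y => y.2.1
      left_inv := fun x => rfl
      right_inv := by
        rintro ⟨c, x, hx⟩
        simp only [SimpleGraph.ConnectedComponent.mem_supp_iff] at hx
        subst hx
        rfl }
  have hcardV : Nat.card V = q ^ 2 - 1 := by
    rw [Nat.card_eq_fintype_card]
    rw [Fintype.card_subtype_compl (fun x : Fin 2 → F => x = 0)]
    rw [Fintype.card_subtype_eq (0 : Fin 2 → F)]
    rw [Fintype.card_fun]
    simp [hq]
  have hsum : Nat.card V = Fintype.card CC * (2 * (q - 1)) := by
    rw [Nat.card_congr e, Nat.card_eq_fintype_card, Fintype.card_sigma]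
    have hc : ∀ c : CC, Fintype.card c.supp = 2 * (q - 1) := by
      intro c
      rw [← Nat.card_eq_fintype_card, Nat.card_coe_set_eq]
      exact part3 c
    rw [Finset.sum_congr rfl (fun c _ => hc c), Finset.sum_const, Finset.card_univ, smul_eq_mul]
  have hq2 : 2 ≤ q := Fintype.one_lt_card
  have hfact : ∀ m : ℕ, 2 ≤ m → m ^ 2 - 1 = (m + 1) * (m - 1) := by
    intro m hm
    obtain ⟨k, rfl⟩ : ∃ k, m = k + 2 := ⟨m - 2, by omega⟩
    have h1 : (k + 2) ^ 2 = k * k + 4 * k + 4 := by ring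
    have h2 : (k + 2 + 1) * (k + 2 - 1) = k * k + 4 * k + 3 := by
      have h3 : k + 2 - 1 = k + 1 := by omega
      rw [h3]; ring
    omega
  have hN : Fintype.card CC * (2 * (q - 1)) = (q + 1) * (q - 1) := by
    rw [← hsum, hcardV, hfact q hq2]
  have : Nat.card CC = Fintype.card CC := Nat.card_eq_fintype_card
  rw [this]
  have hq1 : 0 < q - 1 := by omega
  apply Nat.eq_of_mul_eq_mul_right hq1
  calc 2 * Fintype.card CC * (q - 1) = Fintype.card CC * (2 * (q - 1)) := by ring
    _ = (q + 1) * (q - 1) := hN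
end

section
/- Let F and E be finite fields and let m, n ≥ 1 be integers. If the graphs TD(F,n) and TD(E,m) are isomorphic, then n = m and |F| = |E| (hence F and E are isomorphic as fields). -/
open SimpleGraph

set_option linter.unnecessarySimpa false

lemma aux_ker (F : Type*) [Field F] [Fintype F] {n : ℕ} (v : Fin n → F) (hv : v ≠ 0) :
    Nat.card {y : Fin n → F // ∑ i, v i * y i = 0} = Fintype.card F ^ (n - 1) := by
  have hn : 1 ≤ n := by
    by_contra hc
    push_neg at hc
    interval_cases n
    · exact hv (Subsingleton.elim _ _)
  obtain ⟨j, hj⟩ : ∃ j, v j ≠ 0 := Function.ne_iff.mp hv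
  set f : (Fin n → F) →+ F := AddMonoidHom.mk' (fun y => ∑ i, v i * y i)
    (by intro a b; simp [mul_add, Finset.sum_add_distrib]) with hf
  have hsurj : Function.Surjective f := by
    intro c
    refine ⟨fun i => if i = j then (v j)⁻¹ * c else 0, ?_⟩
    simp [hf, mul_ite, Finset.sum_ite_eq', ← mul_assoc, mul_inv_cancel₀ hj]
  have hq := AddSubgroup.card_eq_card_quotient_mul_card_addSubgroup f.ker
  rw [Nat.card_congr (QuotientAddGroup.quotientKerEquivOfSurjective f hsurj).toEquiv] at hq
  have h1 : Nat.card {y : Fin n → F // ∑ i, v i * y i = 0} = Nat.card f.ker := by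
    apply Nat.card_congr
    exact Equiv.subtypeEquivRight (by intro y; simp [f.mem_ker, hf])
  have h2 : Nat.card (Fin n → F) = Fintype.card F ^ n := by
    simp [Nat.card_eq_fintype_card]
  have h3 : Nat.card F = Fintype.card F := Nat.card_eq_fintype_card
  rw [h2, h3, h1.symm] at hq
  have hpos : 0 < Fintype.card F := Fintype.card_pos
  refine Nat.eq_of_mul_eq_mul_left hpos ?_
  rw [← hq, ← pow_succ', Nat.sub_add_cancel hn]


lemma aux_ne_card {α : Type*} [Fintype α] [DecidableEq α] (a : α) :
    Nat.card {x : α // x ≠ a} = Fintype.card α - 1 := by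
  rw [Nat.card_eq_fintype_card]
  have := Fintype.card_subtype_compl (fun x : α => x = a)
  simpa using this

lemma aux_hyp (F : Type*) [Field F] [Fintype F] {n : ℕ} (v : Fin n → F) (hv : v ≠ 0) :
    Nat.card {y : Fin n → F // (∑ i, v i * y i = 0) ∧ y ≠ 0}
      = Fintype.card F ^ (n - 1) - 1 := by
  classical
  have h0 : ∑ i, v i * (0 : Fin n → F) i = 0 := by simp
  have e : {y : Fin n → F // (∑ i, v i * y i = 0) ∧ y ≠ 0}
      ≃ {z : {y : Fin n → F // ∑ i, v i * y i = 0} // z ≠ ⟨0, h0⟩} :=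
    { toFun := fun y => ⟨⟨y.1, y.2.1⟩, fun hc => y.2.2 (congrArg Subtype.val hc)⟩
      invFun := fun z => ⟨z.1.1, z.1.2, fun hc => z.2 (Subtype.ext hc)⟩
      left_inv := fun y => rfl
      right_inv := fun z => rfl }
  rw [Nat.card_congr e, aux_ne_card, ← Nat.card_eq_fintype_card, aux_ker F v hv]

lemma aux_deg_le (F : Type*) [Field F] [Fintype F] {n : ℕ}
    (v : {x : Fin n → F // x ≠ 0}) :
    Nat.card ((TD F n).neighborSet v) ≤ Fintype.card F ^ (n - 1) - 1 := by
  rw [← aux_hyp F v.1 v.2]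
  exact Nat.card_le_card_of_injective
    (fun w : (TD F n).neighborSet v =>
      (⟨w.1.1, w.2.2, w.1.2⟩ : {y : Fin n → F // (∑ i, v.1 i * y i = 0) ∧ y ≠ 0}))
    (by
      intro w1 w2 h
      simp only [Subtype.mk.injEq] at h
      exact Subtype.ext (Subtype.ext h))

lemma aux_deg_eq (F : Type*) [Field F] [Fintype F] {n : ℕ} (hn : 1 ≤ n) :
    ∃ v, Nat.card ((TD F n).neighborSet v) = Fintype.card F ^ (n - 1) - 1 := by
  classical
  set j : Fin n := ⟨0, hn⟩ with hj
  set e0 : Fin n → F := fun i => if i = j then 1 else 0 with he0def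
  have he0 : e0 ≠ 0 := by
    intro hc
    have := congrFun hc j
    simp [he0def] at this
  have hself : ∑ i, e0 i * e0 i = (1 : F) := by
    simp [he0def, ite_mul, Finset.sum_ite_eq']
  refine ⟨⟨e0, he0⟩, ?_⟩
  rw [← aux_hyp F e0 he0]
  apply Nat.card_congr
  refine
    { toFun := fun w => ⟨w.1.1, w.2.2, w.1.2⟩
      invFun := fun y => ⟨⟨y.1, y.2.2⟩, ⟨?_, y.2.1⟩⟩
      left_inv := fun w => rfl
      right_inv := fun y => rfl }
  intro hc
  have h1 : e0 = y.1 := congrArg Subtype.val hc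
  have := y.2.1
  rw [← h1, hself] at this
  exact one_ne_zero this


/-- if `F`, `E` are finite fields and `TD(F,n)` is isomorphic to `TD(E,m)`,
then `n = m`, `|F| = |E|`, and hence `F` and `E` are isomorphic as fields. -/
theorem stmt5 (F E : Type*) [Field F] [Fintype F] [Field E] [Fintype E]
    (m n : ℕ) (hm : 1 ≤ m) (hn : 1 ≤ n)
    (h : Nonempty (TD F n ≃g TD E m)) :
    n = m ∧ Fintype.card F = Fintype.card E ∧ Nonempty (F ≃+* E) := by
  classical
  obtain ⟨e⟩ := h
  set q := Fintype.card F with hq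
  set p := Fintype.card E with hp
  have hq2 : 2 ≤ q := Fintype.one_lt_card
  have hp2 : 2 ≤ p := Fintype.one_lt_card
  -- vertex counts
  have hvert : q ^ n - 1 = p ^ m - 1 := by
    have := Nat.card_congr e.toEquiv
    have hF : Nat.card {x : Fin n → F // x ≠ 0} = q ^ n - 1 := by
      rw [aux_ne_card (0 : Fin n → F)]
      simp [hq]
    have hE : Nat.card {x : Fin m → E // x ≠ 0} = p ^ m - 1 := by
      rw [aux_ne_card (0 : Fin m → E)]
      simp [hp]
    rw [hF, hE] at this
    exact this
  have hqn : 1 ≤ q ^ n := Nat.one_le_pow _ _ (by omega)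
  have hpm : 1 ≤ p ^ m := Nat.one_le_pow _ _ (by omega)
  have hcard : q ^ n = p ^ m := by omega
  -- max degrees
  have hdegF : ∀ v, Nat.card ((TD F n).neighborSet v) ≤ q ^ (n - 1) - 1 :=
    fun v => aux_deg_le F v
  have hdegE : ∀ v, Nat.card ((TD E m).neighborSet v) ≤ p ^ (m - 1) - 1 :=
    fun v => aux_deg_le E v
  obtain ⟨vF, hvF⟩ := aux_deg_eq F hn
  obtain ⟨vE, hvE⟩ := aux_deg_eq E hm
  have h1 : q ^ (n - 1) - 1 ≤ p ^ (m - 1) - 1 := by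
    rw [← hvF, Nat.card_congr (e.mapNeighborSet vF)]
    exact hdegE _
  have h2 : p ^ (m - 1) - 1 ≤ q ^ (n - 1) - 1 := by
    rw [← hvE, Nat.card_congr (e.symm.mapNeighborSet vE)]
    exact hdegF _
  have hqn1 : 1 ≤ q ^ (n - 1) := Nat.one_le_pow _ _ (by omega)
  have hpm1 : 1 ≤ p ^ (m - 1) := Nat.one_le_pow _ _ (by omega)
  have hmax : q ^ (n - 1) = p ^ (m - 1) := by omega
  -- deduce q = p
  have hqp : q = p := by
    have hn' : n = (n - 1) + 1 := by omega
    have hm' : m = (m - 1) + 1 := by omega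
    rw [hn', pow_succ] at hcard
    rw [hm', pow_succ] at hcard
    rw [hmax] at hcard
    exact Nat.eq_of_mul_eq_mul_left (by positivity) hcard
  have hnm : n = m := by
    rw [hqp] at hcard
    exact Nat.pow_right_injective hp2 hcard
  exact ⟨hnm, hqp, ⟨FiniteField.ringEquivOfCardEq hqp⟩⟩
end

section
/- Let F_1,…,F_t be finite fields, let R = F_1 × ⋯ × F_t, let n ≥ 1, and let a = (a_1,…,a_n) be a nonzero vector in R^n, where a_j = (a_{j1},…,a_{jt}). For i = 1,…,t set τ_i = 0 if (a_{1i}, a_{2i},…, a_{ni}) = (0,…,0) and τ_i = 1 otherwise. Then the degree of a in TD(R,n) equals |R|^n / (∏_{i=1}^t |F_i|^{τ_i}) − 1 if ‖a‖ ≠ 0, and equals |R|^n / (∏_{i=1}^t |F_i|^{τ_i}) − 2 if ‖a‖ = 0. -/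
open SimpleGraph

open Finset

section aux
variable {F : Type*} [Field F] [Fintype F] {n : ℕ}

/-- The dot-with-`c` linear functional on `Fin n → F`. -/
noncomputable def dotMap (c : Fin n → F) : (Fin n → F) →ₗ[F] F where
  toFun x := ∑ j, c j * x j
  map_add' x y := by simp [mul_add, Finset.sum_add_distrib]
  map_smul' r x := by simp [Finset.mul_sum, mul_left_comm]

lemma card_sol_zero (c : Fin n → F) (hc : ∀ j, c j = 0) :
    Nat.card {x : Fin n → F // ∑ j, c j * x j = 0} = Fintype.card F ^ n := by
  have h : ∀ x : Fin n → F, ∑ j, c j * x j = 0 := fun x => by simp [hc]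
  rw [Nat.card_congr (Equiv.subtypeUnivEquiv h)]
  simp [Nat.card_eq_fintype_card]

lemma card_sol_ne (c : Fin n → F) (hc : ∃ j, c j ≠ 0) (hn : 1 ≤ n) :
    Nat.card {x : Fin n → F // ∑ j, c j * x j = 0} = Fintype.card F ^ (n - 1) := by
  classical
  set φ := dotMap c with hφ
  have hker : Nat.card {x : Fin n → F // ∑ j, c j * x j = 0}
      = Nat.card (LinearMap.ker φ) := by
    apply Nat.card_congr
    exact Equiv.subtypeEquivRight (fun x => by simp [hφ, dotMap, LinearMap.mem_ker])
  obtain ⟨j, hj⟩ := hc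
  have hsurj : Function.Surjective φ := by
    intro y
    refine ⟨fun k => if k = j then (c j)⁻¹ * y else 0, ?_⟩
    show ∑ k, c k * (if k = j then (c j)⁻¹ * y else 0) = y
    rw [Finset.sum_eq_single j]
    · rw [if_pos rfl, ← mul_assoc, mul_inv_cancel₀ hj, one_mul]
    · intro b _ hb; rw [if_neg hb, mul_zero]
    · intro h; exact absurd (Finset.mem_univ j) h
  have hrange : LinearMap.range φ = ⊤ := LinearMap.range_eq_top.2 hsurj
  have hrank := LinearMap.finrank_range_add_finrank_ker φ
  rw [hrange] at hrank
  rw [finrank_top] at hrank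
  rw [Module.finrank_self] at hrank
  rw [Module.finrank_fin_fun] at hrank
  have hker_rank : Module.finrank F (LinearMap.ker φ) = n - 1 := Nat.eq_sub_of_add_eq' hrank
  haveI : Fintype (LinearMap.ker φ) := Fintype.ofFinite _
  rw [hker, Nat.card_eq_fintype_card]
  rw [Module.card_eq_pow_finrank (K := F) (V := LinearMap.ker φ)]
  rw [hker_rank]

end aux

def solEquiv {t n : ℕ} {F : Fin t → Type*} [∀ i, Field (F i)]
    (a : Fin n → ∀ i, F i) :
    {b : Fin n → ∀ i, F i // ∑ j, a j * b j = 0} ≃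
      ∀ i, {x : Fin n → F i // ∑ j, a j i * x j = 0} where
  toFun b i := ⟨fun j => b.1 j i, by
    have := congrFun b.2 i
    simpa [Finset.sum_apply] using this⟩
  invFun x := ⟨fun j i => (x i).1 j, by
    funext i
    simpa [Finset.sum_apply] using (x i).2⟩
  left_inv b := rfl
  right_inv x := rfl


/-- degree formula in `TD(R,n)` for a reduced ring `R = F₁ × ⋯ × F_t`
(a product of finite fields): the degree of a nonzero vertex `a` is
`|R|^n / ∏ |F i|^(τ i) - 1` if `‖a‖ ≠ 0` and `|R|^n / ∏ |F i|^(τ i) - 2` if `‖a‖ = 0`,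
where `τ i = 0` if all the `i`-th coordinates of the entries of `a` vanish, else `τ i = 1`. -/
theorem stmt6 (t : ℕ) (F : Fin t → Type*) [∀ i, Field (F i)] [∀ i, Fintype (F i)]
    (n : ℕ) (hn : 1 ≤ n)
    (a : {x : Fin n → (∀ i, F i) // x ≠ 0})
    (τ : Fin t → ℕ)
    (hτ0 : ∀ i, (∀ j, a.1 j i = 0) → τ i = 0)
    (hτ1 : ∀ i, (∃ j, a.1 j i ≠ 0) → τ i = 1) :
    (∑ j, a.1 j ^ 2 ≠ 0 →
      Nat.card ((TD (∀ i, F i) n).neighborSet a) =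
        (∏ i, Fintype.card (F i)) ^ n / (∏ i, Fintype.card (F i) ^ τ i) - 1) ∧
    (∑ j, a.1 j ^ 2 = 0 →
      Nat.card ((TD (∀ i, F i) n).neighborSet a) =
        (∏ i, Fintype.card (F i)) ^ n / (∏ i, Fintype.card (F i) ^ τ i) - 2) := by
  classical
  set R := ∀ i, F i with hR
  -- τ i ≤ 1
  have hτle : ∀ i, τ i ≤ 1 := by
    intro i
    by_cases h : ∀ j, a.1 j i = 0
    · rw [hτ0 i h]; omega
    · push_neg at h; rw [hτ1 i h]
  -- cardinality of full solution set
  have hS : Nat.card {b : Fin n → R // ∑ j, a.1 j * b j = 0} =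
      ∏ i, Fintype.card (F i) ^ (n - τ i) := by
    rw [Nat.card_congr (solEquiv a.1), Nat.card_pi]
    refine Finset.prod_congr rfl (fun i _ => ?_)
    by_cases h : ∀ j, a.1 j i = 0
    · rw [hτ0 i h, card_sol_zero _ h]; simp
    · push_neg at h; rw [hτ1 i h, card_sol_ne _ h hn]
  -- the division simplifies
  have hdiv : (∏ i, Fintype.card (F i)) ^ n / (∏ i, Fintype.card (F i) ^ τ i) =
      ∏ i, Fintype.card (F i) ^ (n - τ i) := by
    have h1 : (∏ i, Fintype.card (F i)) ^ n =
        (∏ i, Fintype.card (F i) ^ τ i) * ∏ i, Fintype.card (F i) ^ (n - τ i) := by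
      rw [← Finset.prod_pow, ← Finset.prod_mul_distrib]
      refine Finset.prod_congr rfl (fun i _ => ?_)
      rw [← pow_add]
      congr 1
      exact Eq.symm <| Nat.add_sub_cancel' (le_trans (hτle i) hn)
    rw [h1, Nat.mul_div_cancel_left]
    exact Finset.prod_pos (fun i _ => pow_pos Fintype.card_pos _)
  -- set up Finsets
  set D : Finset (Fin n → R) :=
    Finset.univ.filter (fun b => ∑ j, a.1 j * b j = 0) with hD
  have hDcard : D.card = ∏ i, Fintype.card (F i) ^ (n - τ i) := by
    rw [← hS, Nat.card_eq_fintype_card, Fintype.card_subtype]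
  have h0D : (0 : Fin n → R) ∈ D := by simp [hD]
  -- neighbors as a Finset
  have hNeigh : Nat.card ((TD R n).neighborSet a) =
      (D.filter (fun b => b ≠ 0 ∧ b ≠ a.1)).card := by
    rw [← Fintype.card_coe, ← Nat.card_eq_fintype_card]
    apply Nat.card_congr
    refine ⟨fun v => ⟨v.1.1, ?_⟩, fun b => ⟨⟨b.1, ?_⟩, ?_⟩, fun v => rfl, fun b => rfl⟩
    · have hv : (TD R n).Adj a v.1 := v.2
      obtain ⟨hne, hdot⟩ := hv
      simp only [hD, Finset.mem_filter, Finset.mem_univ, true_and]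
      exact ⟨hdot, v.1.2, fun h => hne (Subtype.ext h.symm)⟩
    · have := b.2
      simp only [hD, Finset.mem_filter, Finset.mem_univ, true_and] at this
      exact this.2.1
    · have hb := b.2
      simp only [hD, Finset.mem_filter, Finset.mem_univ, true_and] at hb
      exact ⟨fun h => hb.2.2 (congrArg Subtype.val h).symm, hb.1⟩
  have hdotaa : ∑ j, a.1 j * a.1 j = ∑ j, a.1 j ^ 2 := by
    refine Finset.sum_congr rfl (fun j _ => ?_)
    rw [sq]
  constructor
  · intro hA
    have hfilter : D.filter (fun b => b ≠ 0 ∧ b ≠ a.1) = D.erase 0 := by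
      ext b
      simp only [Finset.mem_filter, Finset.mem_erase, hD, Finset.mem_univ, true_and]
      constructor
      · rintro ⟨h1, h2, _⟩; exact ⟨h2, h1⟩
      · rintro ⟨h1, h2⟩
        refine ⟨h2, h1, fun h => hA ?_⟩
        rw [h] at h2
        rw [← hdotaa]
        exact h2
    rw [hNeigh, hfilter, Finset.card_erase_of_mem h0D, hDcard, hdiv]
  · intro hA
    have haD : a.1 ∈ D := by
      simp only [hD, Finset.mem_filter, Finset.mem_univ, true_and]
      rw [hdotaa]; exact hA
    have hfilter : D.filter (fun b => b ≠ 0 ∧ b ≠ a.1) = (D.erase 0).erase a.1 := by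
      ext b
      simp only [Finset.mem_filter, Finset.mem_erase]
      tauto
    have haD' : a.1 ∈ D.erase 0 := Finset.mem_erase.2 ⟨a.2, haD⟩
    rw [hNeigh, hfilter, Finset.card_erase_of_mem haD', Finset.card_erase_of_mem h0D,
      hDcard, hdiv, Nat.sub_sub]
end

section
/- Let F be a finite field with q ≥ 3 elements and let n ≥ 2 be an integer. Then the domination number of TD(F,n) equals q + 1; that is, there is a dominating set of TD(F,n) of cardinality q + 1, and every dominating set of TD(F,n) has cardinality at least q + 1. -/
open SimpleGraph

attribute [local instance] Classical.propDecidable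

/-- Cardinality bound on the nonzero part of a hyperplane. -/
lemma kerCard {F : Type*} [Field F] [Fintype F] {n : ℕ} (d : Fin n → F) (i0 : Fin n)
    (hd : d i0 ≠ 0) :
    (Finset.univ.filter fun v : {x : Fin n → F // x ≠ 0} => ∑ i, v.1 i * d i = 0).card
      ≤ Fintype.card F ^ (n - 1) - 1 := by
  classical
  have hsub : Fintype.card {i : Fin n // i ≠ i0} = n - 1 := by
    simp [Fintype.card_subtype_compl]
  have h := Finset.card_le_card_of_injOn
    (f := fun v : {x : Fin n → F // x ≠ 0} => (fun j : {i : Fin n // i ≠ i0} => v.1 j.1))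
    (s := Finset.univ.filter fun v : {x : Fin n → F // x ≠ 0} => ∑ i, v.1 i * d i = 0)
    (t := (Finset.univ : Finset ({i : Fin n // i ≠ i0} → F)).erase 0)
    (by
      intro v hv
      rw [Finset.mem_coe, Finset.mem_filter] at hv
      refine Finset.mem_erase.mpr ⟨?_, Finset.mem_univ _⟩
      intro h0
      have hz : ∀ i : Fin n, i ≠ i0 → v.1 i = 0 := by
        intro i hi
        exact congrFun h0 ⟨i, hi⟩
      have hsum : ∑ i, v.1 i * d i = v.1 i0 * d i0 := by
        refine Finset.sum_eq_single i0 (fun i _ hi => by rw [hz i hi, zero_mul]) (by simp)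
      have : v.1 i0 = 0 := by
        have := hv.2
        rw [hsum] at this
        exact (mul_eq_zero.mp this).resolve_right hd
      apply v.2
      funext i
      by_cases hi : i = i0
      · rw [hi]; exact this
      · exact hz i hi)
    (by
      intro v hv v' hv' hvv'
      simp only [Finset.coe_filter, Set.mem_setOf_eq, Finset.mem_univ, true_and] at hv hv'
      have hoff : ∀ i : Fin n, i ≠ i0 → v.1 i = v'.1 i := by
        intro i hi
        exact congrFun hvv' ⟨i, hi⟩
      have htail : ∑ i ∈ Finset.univ.erase i0, v.1 i * d i
          = ∑ i ∈ Finset.univ.erase i0, v'.1 i * d i := by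
        refine Finset.sum_congr rfl (fun i hi => ?_)
        rw [hoff i (Finset.mem_erase.mp hi).1]
      have h1 := Finset.add_sum_erase Finset.univ (fun i => v.1 i * d i) (Finset.mem_univ i0)
      have h2 := Finset.add_sum_erase Finset.univ (fun i => v'.1 i * d i) (Finset.mem_univ i0)
      have hi0 : v.1 i0 = v'.1 i0 := by
        have : v.1 i0 * d i0 = v'.1 i0 * d i0 := by
          have e1 : v.1 i0 * d i0 + ∑ i ∈ Finset.univ.erase i0, v.1 i * d i = 0 := by
            rw [h1]; exact hv
          have e2 : v'.1 i0 * d i0 + ∑ i ∈ Finset.univ.erase i0, v'.1 i * d i = 0 := by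
            rw [h2]; exact hv'
          rw [htail] at e1
          exact add_right_cancel (e1.trans e2.symm)
        exact mul_right_cancel₀ hd this
      apply Subtype.ext
      funext i
      by_cases hi : i = i0
      · rw [hi]; exact hi0
      · exact hoff i hi)
  calc _ ≤ ((Finset.univ : Finset ({i : Fin n // i ≠ i0} → F)).erase 0).card := h
    _ = Fintype.card F ^ (n - 1) - 1 := by
        rw [Finset.card_erase_of_mem (Finset.mem_univ _), Finset.card_univ,
          Fintype.card_fun, hsub]

/-- if `F` is a finite field with `q ≥ 3` elements and `n ≥ 2`, then the
domination number of `TD(F,n)` is exactly `q + 1`: there is a dominating set of size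
`q + 1`, and every dominating set has size at least `q + 1`. -/
theorem stmt9 (F : Type*) [Field F] [Fintype F] (hq : 3 ≤ Fintype.card F)
    (n : ℕ) (hn : 2 ≤ n) :
    (∃ D : Finset {x : Fin n → F // x ≠ 0},
        (∀ v ∉ D, ∃ d ∈ D, (TD F n).Adj v d) ∧ D.card = Fintype.card F + 1) ∧
    (∀ D : Finset {x : Fin n → F // x ≠ 0},
        (∀ v ∉ D, ∃ d ∈ D, (TD F n).Adj v d) → Fintype.card F + 1 ≤ D.card) := by
  classical
  have hq2 : (2 : ℕ) ≤ Fintype.card F := by omega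
  set q := Fintype.card F with hqdef
  let i0 : Fin n := ⟨0, by omega⟩
  let i1 : Fin n := ⟨1, by omega⟩
  have hi01 : i0 ≠ i1 := by
    intro h
    have : (0 : ℕ) = 1 := congrArg Fin.val h
    omega
  set e : F → (Fin n → F) := fun a i => if i = i0 then 1 else if i = i1 then a else 0 with he
  set w : Fin n → F := fun i => if i = i1 then 1 else 0 with hw
  have he0 : ∀ a, e a ≠ 0 := by
    intro a h
    have := congrFun h i0
    simp [he] at this
  have hw0 : w ≠ 0 := by
    intro h
    have := congrFun h i1
    simp [hw] at this
  have hdot1 : ∀ (a : F) (x : Fin n → F), ∑ i, x i * e a i = x i0 + x i1 * a := by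
    intro a x
    have hsub : ∑ i, x i * e a i = ∑ i ∈ ({i0, i1} : Finset (Fin n)), x i * e a i := by
      refine (Finset.sum_subset (Finset.subset_univ _) ?_).symm
      intro i _ hi
      simp only [Finset.mem_insert, Finset.mem_singleton, not_or] at hi
      simp [he, hi.1, hi.2]
    rw [hsub, Finset.sum_pair hi01]
    simp [he, hi01, Ne.symm hi01]
  have hdot2 : ∀ (x : Fin n → F), ∑ i, x i * w i = x i1 := by
    intro x
    simp [hw, mul_ite]
  -- the dominating set
  set fa : F → {x : Fin n → F // x ≠ 0} := fun a => ⟨e a, he0 a⟩ with hfa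
  set D0 : Finset {x : Fin n → F // x ≠ 0} :=
    insert ⟨w, hw0⟩ (Finset.univ.image fa) with hD0
  have hfainj : Function.Injective fa := by
    intro a b hab
    have := congrFun (congrArg Subtype.val hab) i1
    simpa [hfa, he, Ne.symm hi01] using this
  have hwnot : (⟨w, hw0⟩ : {x : Fin n → F // x ≠ 0}) ∉ Finset.univ.image fa := by
    intro h
    obtain ⟨a, -, ha⟩ := Finset.mem_image.mp h
    have := congrFun (congrArg Subtype.val ha) i0
    simp [hfa, he, hw, hi01, Ne.symm hi01] at this
  constructor
  · refine ⟨D0, ?_, ?_⟩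
    · intro v hv
      by_cases hv1 : v.1 i1 = 0
      · refine ⟨⟨w, hw0⟩, Finset.mem_insert_self _ _, ?_, ?_⟩
        · intro h; exact hv (h ▸ Finset.mem_insert_self _ _)
        · rw [hdot2]; exact hv1
      · refine ⟨fa (-(v.1 i0) * (v.1 i1)⁻¹), ?_, ?_, ?_⟩
        · exact Finset.mem_insert_of_mem (Finset.mem_image_of_mem fa (Finset.mem_univ _))
        · intro h
          exact hv (h ▸ Finset.mem_insert_of_mem (Finset.mem_image_of_mem fa (Finset.mem_univ _)))
        · rw [hdot1]
          field_simp
          ring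
    · rw [hD0, Finset.card_insert_of_notMem hwnot,
        Finset.card_image_of_injective _ hfainj, Finset.card_univ]
  · intro D hdom
    by_contra hle
    push_neg at hle
    have hDq : D.card ≤ q := by omega
    set m := q ^ (n - 1) with hm
    have hqm : q ^ n = q * m := by
      rw [hm, ← pow_succ']
      congr 1
      omega
    have hmq : q ≤ m := Nat.le_self_pow (by omega) q
    have h3m : 3 * m ≤ q * m := Nat.mul_le_mul_right m hq
    have hVcard : (Finset.univ : Finset {x : Fin n → F // x ≠ 0}).card = q ^ n - 1 := by
      rw [Finset.card_univ]
      calc Fintype.card {x : Fin n → F // x ≠ 0}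
          = Fintype.card (Fin n → F) - Fintype.card {x : Fin n → F // x = 0} :=
            Fintype.card_subtype_compl _
        _ = q ^ n - 1 := by
            rw [Fintype.card_subtype_eq, Fintype.card_fun, Fintype.card_fin]
    have hKer : ∀ d : {x : Fin n → F // x ≠ 0},
        (Finset.univ.filter fun v : {x : Fin n → F // x ≠ 0} =>
          ∑ i, v.1 i * d.1 i = 0).card ≤ m - 1 := by
      intro d
      obtain ⟨i, hi⟩ := Function.ne_iff.mp d.2
      exact kerCard d.1 i (by simpa using hi)
    set B := D.biUnion (fun d => Finset.univ.filter fun v : {x : Fin n → F // x ≠ 0} =>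
      ∑ i, v.1 i * d.1 i = 0) with hB
    have hBcard : B.card ≤ q * m - q := by
      have h1 : B.card ≤ D.card • (m - 1) :=
        le_trans Finset.card_biUnion_le (Finset.sum_le_card_nsmul _ _ _ (fun d _ => hKer d))
      rw [smul_eq_mul] at h1
      have h2 : D.card * (m - 1) ≤ q * (m - 1) := Nat.mul_le_mul_right _ hDq
      calc B.card ≤ q * (m - 1) := le_trans h1 h2
        _ = q * m - q := by rw [Nat.mul_sub, mul_one]
    obtain ⟨u, hu⟩ : ∃ u, u ∉ B := by
      by_contra h
      push_neg at h
      have hBu : B = Finset.univ := Finset.eq_univ_iff_forall.mpr h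
      have := hVcard
      rw [← hBu] at this
      rw [hqm] at this
      obtain ⟨P, hP⟩ : ∃ P, P = q * m := ⟨_, rfl⟩
      rw [← hP] at this hBcard h3m
      omega
    have hu' : ∀ d ∈ D, ∑ i, u.1 i * d.1 i ≠ 0 := by
      intro d hd h0
      exact hu (Finset.mem_biUnion.mpr ⟨d, hd, Finset.mem_filter.mpr ⟨Finset.mem_univ _, h0⟩⟩)
    have hmul0 : ∀ c : F, c ≠ 0 → (fun i => c * u.1 i) ≠ (0 : Fin n → F) := by
      intro c hc h
      apply u.2
      funext i
      have := congrFun h i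
      simp only [Pi.zero_apply] at this
      exact (mul_eq_zero.mp this).resolve_left hc
    set g : Fˣ → {x : Fin n → F // x ≠ 0} :=
      fun c => ⟨fun i => (c : F) * u.1 i, hmul0 c c.ne_zero⟩ with hg
    have hginj : Function.Injective g := by
      intro c c' hcc'
      obtain ⟨i, hi⟩ := Function.ne_iff.mp u.2
      have hi' : u.1 i ≠ 0 := by simpa using hi
      have := congrFun (congrArg Subtype.val hcc') i
      exact Units.ext (mul_right_cancel₀ hi' this)
    set S := Finset.univ.image g with hS
    have hScard : S.card = q - 1 := by
      rw [hS, Finset.card_image_of_injective _ hginj, Finset.card_univ, Fintype.card_units]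
    have hSD : S ⊆ D := by
      intro s hs
      obtain ⟨c, -, rfl⟩ := Finset.mem_image.mp hs
      by_contra hsD
      obtain ⟨d, hd, hadj⟩ := hdom _ hsD
      have hdot : ∑ i, (c : F) * u.1 i * d.1 i = 0 := hadj.2
      have : (c : F) * ∑ i, u.1 i * d.1 i = 0 := by
        rw [Finset.mul_sum, ← hdot]
        exact Finset.sum_congr rfl (fun i _ => by ring)
      exact hu' d hd ((mul_eq_zero.mp this).resolve_left c.ne_zero)
    have hDScard : (D \ S).card ≤ 1 := by
      rw [Finset.card_sdiff_of_subset hSD, hScard]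
      omega
    set Ku := Finset.univ.filter
      (fun v : {x : Fin n → F // x ≠ 0} => ∑ i, v.1 i * u.1 i = 0) with hKu
    set C := (D ∪ Ku) ∪ (D \ S).biUnion (fun d =>
      Finset.univ.filter fun v : {x : Fin n → F // x ≠ 0} =>
        ∑ i, v.1 i * d.1 i = 0) with hC
    have hcover : (Finset.univ : Finset {x : Fin n → F // x ≠ 0}) ⊆ C := by
      intro v _
      by_cases hvD : v ∈ D
      · exact Finset.mem_union_left _ (Finset.mem_union_left _ hvD)
      obtain ⟨d, hd, hadj⟩ := hdom v hvD
      have hdot : ∑ i, v.1 i * d.1 i = 0 := hadj.2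
      by_cases hdS : d ∈ S
      · obtain ⟨c, -, rfl⟩ := Finset.mem_image.mp hdS
        have hdot' : (c : F) * ∑ i, v.1 i * u.1 i = 0 := by
          rw [Finset.mul_sum, ← hdot]
          exact Finset.sum_congr rfl (fun i _ => by ring)
        have : ∑ i, v.1 i * u.1 i = 0 := (mul_eq_zero.mp hdot').resolve_left c.ne_zero
        exact Finset.mem_union_left _ (Finset.mem_union_right _
          (Finset.mem_filter.mpr ⟨Finset.mem_univ _, this⟩))
      · refine Finset.mem_union_right _ (Finset.mem_biUnion.mpr
          ⟨d, Finset.mem_sdiff.mpr ⟨hd, hdS⟩,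
            Finset.mem_filter.mpr ⟨Finset.mem_univ _, hdot⟩⟩)
    have h1 : (D ∪ Ku).card ≤ q + (m - 1) :=
      le_trans (Finset.card_union_le _ _) (add_le_add hDq (hKer u))
    have h2 : ((D \ S).biUnion (fun d =>
        Finset.univ.filter fun v : {x : Fin n → F // x ≠ 0} =>
          ∑ i, v.1 i * d.1 i = 0)).card ≤ 1 * (m - 1) := by
      refine le_trans Finset.card_biUnion_le (le_trans
        (Finset.sum_le_card_nsmul _ _ _ (fun d _ => hKer d)) ?_)
      rw [smul_eq_mul]
      exact Nat.mul_le_mul_right _ hDScard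
    have hfin : q ^ n - 1 ≤ (q + (m - 1)) + 1 * (m - 1) := by
      calc q ^ n - 1 = (Finset.univ : Finset {x : Fin n → F // x ≠ 0}).card := hVcard.symm
        _ ≤ C.card := Finset.card_le_card hcover
        _ ≤ (D ∪ Ku).card + ((D \ S).biUnion _).card := Finset.card_union_le _ _
        _ ≤ (q + (m - 1)) + 1 * (m - 1) := add_le_add h1 h2
    rw [hqm] at hfin
    obtain ⟨P, hP⟩ : ∃ P, P = q * m := ⟨_, rfl⟩
    rw [← hP] at hfin h3m
    omega
end

section
/- Let R be a finite commutative ring with nonzero identity that is not a field, and let n ≥ 2 be an integer. Then the domination number of TD(R,n) is at most k² − 1, where k is the number of non-invertible elements of R; i.e., TD(R,n) has a dominating set of cardinality at most k² − 1. -/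
open SimpleGraph

/-- auxiliary: in a finite nontrivial comm ring that is not a field, there is a
nonzero non-unit. -/
lemma exists_nonzero_nonunit (R : Type*) [CommRing R] [Fintype R] [Nontrivial R]
    (hR : ¬ IsField R) : ∃ a : R, a ≠ 0 ∧ ¬ IsUnit a := by
  by_contra h
  push_neg at h
  exact hR ⟨exists_pair_ne R, mul_comm, fun {a} ha => (h a ha).exists_right_inv⟩

/-- auxiliary: a nonzero non-unit in a finite comm ring is a zero divisor. -/
lemma exists_mul_eq_zero (R : Type*) [CommRing R] [Fintype R]
    (v : R) (hv : ¬ IsUnit v) (hvz : v ≠ 0) : ∃ b : R, b ≠ 0 ∧ v * b = 0 := by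
  have hni : ¬ Function.Injective (fun x : R => v * x) := by
    intro hinj
    obtain ⟨x, hx⟩ := Finite.injective_iff_surjective.mp hinj 1
    exact hv ⟨⟨v, x, hx, by rw [mul_comm]; exact hx⟩, rfl⟩
  rw [Function.Injective] at hni
  push_neg at hni
  obtain ⟨x, y, hxy, hne⟩ := hni
  have hxy' : v * x = v * y := hxy
  exact ⟨x - y, sub_ne_zero.mpr hne, by rw [mul_sub, hxy', sub_self]⟩

lemma key (R : Type*) [CommRing R] [Fintype R] [Nontrivial R]
    (a : R) (ha : a ≠ 0) (hau : ¬ IsUnit a) (v1 v2 : R) :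
    ∃ b c : R, ¬ IsUnit b ∧ ¬ IsUnit c ∧ ¬ (b = 0 ∧ c = 0) ∧ v1 * b + v2 * c = 0 := by
  by_cases hu : IsUnit v1
  · obtain ⟨u, rfl⟩ := hu
    refine ⟨-((↑u⁻¹ : R) * v2 * a), a, ?_, hau, fun h => ha h.2, ?_⟩
    · intro hb
      rw [show -((↑u⁻¹ : R) * v2 * a) = (-((↑u⁻¹ : R) * v2)) * a by ring] at hb
      exact hau (isUnit_of_mul_isUnit_right hb)
    · have h : (↑u : R) * ↑u⁻¹ = 1 := u.mul_inv
      linear_combination (-(v2 * a)) * h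
  · by_cases hz : v1 = 0
    · exact ⟨a, 0, hau, not_isUnit_zero, fun h => ha h.1, by simp [hz]⟩
    · obtain ⟨b, hb0, hvb⟩ := exists_mul_eq_zero R v1 hu hz
      refine ⟨b, 0, ?_, not_isUnit_zero, fun h => hb0 h.1, by simp [hvb]⟩
      intro hb
      obtain ⟨w, rfl⟩ := hb
      have : v1 = 0 := by
        have := congrArg (· * (↑w⁻¹ : R)) hvb
        simpa [mul_assoc] using this
      exact hz this

/-- if `R` is a finite commutative ring with nonzero identity that is not a
field and `n ≥ 2`, then `TD(R,n)` has a dominating set of size at most `k² - 1`, where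
`k` is the number of non-invertible elements of `R`. -/
theorem stmt10 (R : Type*) [CommRing R] [Fintype R] [Nontrivial R]
    (hR : ¬ IsField R) (n : ℕ) (hn : 2 ≤ n)
    (k : ℕ) (hk : k = Nat.card {x : R // ¬ IsUnit x}) :
    ∃ D : Finset {x : Fin n → R // x ≠ 0},
      (∀ v ∉ D, ∃ d ∈ D, (TD R n).Adj v d) ∧ D.card ≤ k ^ 2 - 1 := by
  classical
  obtain ⟨a, ha, hau⟩ := exists_nonzero_nonunit R hR
  set i0 : Fin n := ⟨0, by omega⟩ with hi0
  set i1 : Fin n := ⟨1, by omega⟩ with hi1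
  have h01 : i0 ≠ i1 := by simp [hi0, hi1, Fin.ext_iff]
  set P : {x : Fin n → R // x ≠ 0} → Prop :=
    fun x => ¬ IsUnit (x.1 i0) ∧ ¬ IsUnit (x.1 i1) ∧ ∀ i : Fin n, 2 ≤ i.1 → x.1 i = 0
    with hP
  set D : Finset {x : Fin n → R // x ≠ 0} := Finset.univ.filter P with hD
  refine ⟨D, ?_, ?_⟩
  · intro v hv
    obtain ⟨b, c, hb, hc, hbc, hsum⟩ := key R a ha hau (v.1 i0) (v.1 i1)
    set dfun : Fin n → R := Pi.single i0 b + Pi.single i1 c with hdfun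
    have hd0 : dfun i0 = b := by
      simp [hdfun, Pi.single_eq_same, Pi.single_eq_of_ne h01]
    have hd1 : dfun i1 = c := by
      simp [hdfun, Pi.single_eq_same, Pi.single_eq_of_ne h01.symm]
    have hdrest : ∀ i : Fin n, 2 ≤ i.1 → dfun i = 0 := by
      intro i hi
      have h0 : i ≠ i0 := by simp [hi0, Fin.ext_iff]; omega
      have h1 : i ≠ i1 := by simp [hi1, Fin.ext_iff]; omega
      simp [hdfun, Pi.single_eq_of_ne h0, Pi.single_eq_of_ne h1]
    have hdne : dfun ≠ 0 := by
      intro h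
      refine hbc ⟨?_, ?_⟩
      · rw [← hd0, h]; rfl
      · rw [← hd1, h]; rfl
    set d : {x : Fin n → R // x ≠ 0} := ⟨dfun, hdne⟩ with hd
    have hdD : d ∈ D := by
      rw [hD, Finset.mem_filter]
      refine ⟨Finset.mem_univ _, ?_, ?_, hdrest⟩
      · show ¬ IsUnit (dfun i0); rw [hd0]; exact hb
      · show ¬ IsUnit (dfun i1); rw [hd1]; exact hc
    refine ⟨d, hdD, fun h => hv (h ▸ hdD), ?_⟩
    have hs : ∑ i, v.1 i * dfun i = v.1 i0 * b + v.1 i1 * c := by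
      simp only [hdfun, Pi.add_apply, mul_add, Finset.sum_add_distrib]
      congr 1
      · rw [Fintype.sum_eq_single i0 fun j hj => by
          rw [Pi.single_eq_of_ne hj, mul_zero], Pi.single_eq_same]
      · rw [Fintype.sum_eq_single i1 fun j hj => by
          rw [Pi.single_eq_of_ne hj, mul_zero], Pi.single_eq_same]
    rw [show d.1 = dfun from rfl, hs]
    exact hsum
  · set Z : Finset R := Finset.univ.filter (fun x => ¬ IsUnit x) with hZ
    have hkZ : k = Z.card := by
      rw [hk, Nat.card_eq_fintype_card, Fintype.card_subtype]
    set S : Finset (R × R) := (Z ×ˢ Z).erase (0, 0) with hS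
    have hmem : ((0 : R), (0 : R)) ∈ Z ×ˢ Z := by
      simp [hZ, not_isUnit_zero]
    have hScard : S.card = k ^ 2 - 1 := by
      rw [hS, Finset.card_erase_of_mem hmem, Finset.card_product, ← hkZ, sq]
    rw [← hScard]
    apply Finset.card_le_card_of_injOn (fun x => (x.1 i0, x.1 i1))
    · intro x hx
      simp only [hD, Finset.mem_coe, Finset.mem_filter] at hx
      obtain ⟨-, hx0, hx1, hxr⟩ := hx
      rw [Finset.mem_coe, hS, Finset.mem_erase]
      constructor
      · intro h
        apply x.2
        funext i
        rcases Nat.lt_or_ge i.1 2 with hi | hi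
        · interval_cases hiv : i.1
          · have : i = i0 := by simp [hi0, Fin.ext_iff, hiv]
            rw [this]
            exact congrArg Prod.fst h
          · have : i = i1 := by simp [hi1, Fin.ext_iff, hiv]
            rw [this]
            exact congrArg Prod.snd h
        · exact hxr i hi
      · simp only [Finset.mem_product, hZ, Finset.mem_filter, Finset.mem_univ, true_and]
        exact ⟨hx0, hx1⟩
    · intro x hx y hy hxy
      rw [Finset.mem_coe, hD, Finset.mem_filter] at hx hy
      obtain ⟨-, -, -, hxr⟩ := hx
      obtain ⟨-, -, -, hyr⟩ := hy
      apply Subtype.ext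
      funext i
      rcases Nat.lt_or_ge i.1 2 with hi | hi
      · interval_cases hiv : i.1
        · have : i = i0 := by simp [hi0, Fin.ext_iff, hiv]
          rw [this]
          exact congrArg Prod.fst hxy
        · have : i = i1 := by simp [hi1, Fin.ext_iff, hiv]
          rw [this]
          exact congrArg Prod.snd hxy
      · rw [hxr i hi, hyr i hi]
end

section
/- Let R be a finite commutative ring with nonzero identity that is not a field, and let n ≥ 2 be an integer. Then the domination number of TD(R,n) is at most k + |R| − 2, where k is the number of non-invertible elements of R; i.e., TD(R,n) has a dominating set of cardinality at most k + |R| − 2. -/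
open SimpleGraph

section Aux

variable {R : Type*} [CommRing R]

/-- vector (a, b, 0, ..., 0) -/
def vec2 (n : ℕ) (a b : R) : Fin n → R :=
  fun i => if (i : ℕ) = 0 then a else if (i : ℕ) = 1 then b else 0

lemma vec2_sum {n : ℕ} (hn : 2 ≤ n) (v : Fin n → R) (a b : R) :
    ∑ i, v i * vec2 n a b i = v ⟨0, by omega⟩ * a + v ⟨1, by omega⟩ * b := by
  have hi : (⟨0, by omega⟩ : Fin n) ≠ ⟨1, by omega⟩ := by
    simp [Fin.ext_iff]
  rw [← Finset.sum_subset (Finset.subset_univ ({⟨0, by omega⟩, ⟨1, by omega⟩} : Finset (Fin n)))]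
  · rw [Finset.sum_pair hi]
    simp [vec2]
  · intro i _ hi2
    simp only [Finset.mem_insert, Finset.mem_singleton, not_or, Fin.ext_iff] at hi2
    simp [vec2, hi2.1, hi2.2]

lemma vec2_ne_zero_left {n : ℕ} (hn : 2 ≤ n) {a : R} (b : R) (ha : a ≠ 0) :
    vec2 n a b ≠ 0 := by
  intro h
  have := congrFun h ⟨0, by omega⟩
  simp [vec2] at this
  exact ha this

lemma vec2_ne_zero_right {n : ℕ} (hn : 2 ≤ n) (a : R) {b : R} (hb : b ≠ 0) :
    vec2 n a b ≠ 0 := by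
  intro h
  have := congrFun h ⟨1, by omega⟩
  simp [vec2] at this
  exact hb this

/-- In a finite commutative ring that is not a field, every nonunit has a nonzero
nonunit annihilator. -/
lemma exists_annihilator [Fintype R] [Nontrivial R] (hR : ¬ IsField R)
    {a : R} (ha : ¬ IsUnit a) : ∃ c : R, c ≠ 0 ∧ ¬ IsUnit c ∧ a * c = 0 := by
  classical
  by_cases h0 : a = 0
  · -- need some nonzero nonunit
    have hx : ∃ x : R, x ≠ 0 ∧ ¬ IsUnit x := by
      by_contra hcon
      push_neg at hcon
      apply hR
      refine ⟨exists_pair_ne R, mul_comm, ?_⟩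
      intro x hx
      obtain ⟨u, rfl⟩ := hcon x hx
      exact ⟨(u⁻¹ : Rˣ), u.mul_inv⟩
    obtain ⟨x, hx0, hxu⟩ := hx
    exact ⟨x, hx0, hxu, by rw [h0, zero_mul]⟩
  · have hinj : ¬ Function.Injective (fun x : R => a * x) := by
      intro hinj
      have hsurj := (Finite.injective_iff_surjective).mp hinj
      obtain ⟨x, hx⟩ := hsurj 1
      exact ha (IsUnit.of_mul_eq_one (a := a) x hx)
    rw [Function.not_injective_iff] at hinj
    obtain ⟨x, y, hxy, hne⟩ := hinj
    refine ⟨x - y, sub_ne_zero.mpr hne, ?_, by rw [mul_sub, sub_eq_zero]; exact hxy⟩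
    intro hu
    apply h0
    have h2 : (x - y) * a = (x - y) * 0 := by
      rw [mul_zero, mul_comm]
      rw [mul_sub, sub_eq_zero]; exact hxy
    exact hu.mul_left_cancel h2

end Aux

/-- if `R` is a finite commutative ring with nonzero identity that is not a
field and `n ≥ 2`, then `TD(R,n)` has a dominating set of size at most `k + |R| - 2`,
where `k` is the number of non-invertible elements of `R`. -/
theorem stmt11 (R : Type*) [CommRing R] [Fintype R] [Nontrivial R]
    (hR : ¬ IsField R) (n : ℕ) (hn : 2 ≤ n)
    (k : ℕ) (hk : k = Nat.card {x : R // ¬ IsUnit x}) :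
    ∃ D : Finset {x : Fin n → R // x ≠ 0},
      (∀ v ∉ D, ∃ d ∈ D, (TD R n).Adj v d) ∧ D.card ≤ k + Fintype.card R - 2 := by
  classical
  set SU : Finset R := Finset.univ.filter (fun u : R => IsUnit u) with hSU
  set SN : Finset R := Finset.univ.filter (fun c : R => ¬ IsUnit c ∧ c ≠ 0) with hSN
  set A : Finset {x : Fin n → R // x ≠ 0} :=
    SU.image (fun u => ⟨vec2 n 1 u, vec2_ne_zero_left hn u one_ne_zero⟩) with hA
  set B : Finset {x : Fin n → R // x ≠ 0} :=
    SN.attach.image (fun c =>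
      ⟨vec2 n c.1 0, vec2_ne_zero_left hn 0 ((Finset.mem_filter.mp c.2).2.2)⟩) with hB
  set C : Finset {x : Fin n → R // x ≠ 0} :=
    SN.attach.image (fun c =>
      ⟨vec2 n 0 c.1, vec2_ne_zero_right hn 0 ((Finset.mem_filter.mp c.2).2.2)⟩) with hC
  refine ⟨A ∪ B ∪ C, ?_, ?_⟩
  · -- domination
    intro v hv
    by_cases h0 : IsUnit (v.1 ⟨0, by omega⟩)
    · by_cases h1 : IsUnit (v.1 ⟨1, by omega⟩)
      · -- both units: use (1, -v0 * v1⁻¹)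
        have huu : IsUnit (-(v.1 ⟨0, by omega⟩ * (↑h1.unit⁻¹ : R))) :=
          (h0.mul (h1.unit⁻¹).isUnit).neg
        have hdmem : (⟨vec2 n 1 (-(v.1 ⟨0, by omega⟩ * (↑h1.unit⁻¹ : R))),
            vec2_ne_zero_left hn _ one_ne_zero⟩ : {x : Fin n → R // x ≠ 0}) ∈ A ∪ B ∪ C :=
          Finset.mem_union_left _ (Finset.mem_union_left _
            (Finset.mem_image.mpr ⟨_, Finset.mem_filter.mpr ⟨Finset.mem_univ _, huu⟩, rfl⟩))
        refine ⟨_, hdmem, ?_, ?_⟩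
        · intro h; apply hv; rw [h]; exact hdmem
        · show ∑ i, v.1 i * vec2 n 1 (-(v.1 ⟨0, by omega⟩ * (↑h1.unit⁻¹ : R))) i = 0
          rw [vec2_sum hn]
          have h2 : (v.1 ⟨1, by omega⟩) * (↑h1.unit⁻¹ : R) = 1 := h1.mul_val_inv
          calc v.1 ⟨0, by omega⟩ * 1
                + v.1 ⟨1, by omega⟩ * (-(v.1 ⟨0, by omega⟩ * (↑h1.unit⁻¹ : R)))
              = v.1 ⟨0, by omega⟩
                - v.1 ⟨0, by omega⟩ * (v.1 ⟨1, by omega⟩ * (↑h1.unit⁻¹ : R)) := by ring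
            _ = 0 := by rw [h2, mul_one, sub_self]
      · -- v0 unit, v1 nonunit: use (0, c) with v1 * c = 0
        obtain ⟨c, hc0, hcu, hac⟩ := exists_annihilator hR h1
        have hmem : c ∈ SN := Finset.mem_filter.mpr ⟨Finset.mem_univ _, hcu, hc0⟩
        have hdmem : (⟨vec2 n 0 c, vec2_ne_zero_right hn 0 hc0⟩ : {x : Fin n → R // x ≠ 0})
            ∈ A ∪ B ∪ C :=
          Finset.mem_union_right _
            (Finset.mem_image.mpr ⟨⟨c, hmem⟩, Finset.mem_attach _ _, rfl⟩)
        refine ⟨_, hdmem, ?_, ?_⟩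
        · intro h; apply hv; rw [h]; exact hdmem
        · show ∑ i, v.1 i * vec2 n 0 c i = 0
          rw [vec2_sum hn, mul_zero, zero_add]
          exact hac
    · -- v0 nonunit: use (c, 0) with v0 * c = 0
      obtain ⟨c, hc0, hcu, hac⟩ := exists_annihilator hR h0
      have hmem : c ∈ SN := Finset.mem_filter.mpr ⟨Finset.mem_univ _, hcu, hc0⟩
      have hdmem : (⟨vec2 n c 0, vec2_ne_zero_left hn 0 hc0⟩ : {x : Fin n → R // x ≠ 0})
          ∈ A ∪ B ∪ C :=
        Finset.mem_union_left _ (Finset.mem_union_right _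
          (Finset.mem_image.mpr ⟨⟨c, hmem⟩, Finset.mem_attach _ _, rfl⟩))
      refine ⟨_, hdmem, ?_, ?_⟩
      · intro h; apply hv; rw [h]; exact hdmem
      · show ∑ i, v.1 i * vec2 n c 0 i = 0
        rw [vec2_sum hn, mul_zero, add_zero]
        exact hac
  · -- cardinality
    have hk' : (Finset.univ.filter (fun x : R => ¬ IsUnit x)).card = k := by
      rw [hk, Nat.card_eq_fintype_card, Fintype.card_subtype]
    have hmem0 : (0 : R) ∈ Finset.univ.filter (fun x : R => ¬ IsUnit x) :=
      Finset.mem_filter.mpr ⟨Finset.mem_univ _, not_isUnit_zero⟩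
    have hk1 : 1 ≤ k := by
      rw [← hk']
      exact Finset.card_pos.mpr ⟨0, hmem0⟩
    have hpart : SU.card + (Finset.univ.filter (fun x : R => ¬ IsUnit x)).card
        = Fintype.card R := by
      rw [hSU, Finset.card_filter_add_card_filter_not]
      exact Finset.card_univ
    have hSNcard : SN.card ≤ k - 1 := by
      have hsub : SN ⊆ (Finset.univ.filter (fun x : R => ¬ IsUnit x)).erase 0 := by
        intro x hx
        obtain ⟨_, hxu, hx0⟩ := Finset.mem_filter.mp hx
        exact Finset.mem_erase.mpr ⟨hx0, Finset.mem_filter.mpr ⟨Finset.mem_univ _, hxu⟩⟩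
      have hcerase := Finset.card_erase_of_mem hmem0
      have := Finset.card_le_card hsub
      omega
    have hAcard : A.card ≤ SU.card := Finset.card_image_le
    have hBcard : B.card ≤ k - 1 := by
      refine le_trans Finset.card_image_le ?_
      rw [Finset.card_attach]; exact hSNcard
    have hCcard : C.card ≤ k - 1 := by
      refine le_trans Finset.card_image_le ?_
      rw [Finset.card_attach]; exact hSNcard
    calc (A ∪ B ∪ C).card ≤ (A ∪ B).card + C.card := Finset.card_union_le _ _
      _ ≤ A.card + B.card + C.card := by
          have := Finset.card_union_le A B
          omega
      _ ≤ k + Fintype.card R - 2 := by omega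
end

section
/- Let F be an infinite field and let n ≥ 1. Then TD(F,n) has no finite dominating set; in particular the domination number of TD(F,n) is infinite. -/
open SimpleGraph

/-- if `F` is an infinite field and `n ≥ 1`, then every dominating set of
`TD(F,n)` is infinite; in particular `TD(F,n)` has no finite dominating set. -/
theorem stmt12 (F : Type*) [Field F] [Infinite F] (n : ℕ) (hn : 1 ≤ n) :
    ∀ D : Set {x : Fin n → F // x ≠ 0},
      (∀ v ∉ D, ∃ d ∈ D, (TD F n).Adj v d) → D.Infinite := by
  intro D hdom
  by_contra hinf
  rw [Set.not_infinite] at hinf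
  set g : F → Fin n → F := fun t i => t ^ ((i : ℕ) + 1) with hg
  have hginj : Function.Injective g := by
    intro a b hab
    have := congrFun hab ⟨0, hn⟩
    simpa [g] using this
  set p : (Fin n → F) → Polynomial F :=
    fun d => ∑ i : Fin n, Polynomial.C (d i) * Polynomial.X ^ ((i : ℕ) + 1) with hp
  have hcoeff : ∀ (d : Fin n → F) (j : Fin n), (p d).coeff ((j : ℕ) + 1) = d j := by
    intro d j
    rw [hp]
    simp only [Polynomial.finset_sum_coeff, Polynomial.coeff_C_mul, Polynomial.coeff_X_pow]
    rw [Finset.sum_eq_single j]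
    · simp
    · intro i _ hij
      have : (i : ℕ) + 1 ≠ (j : ℕ) + 1 := by
        simp [Fin.val_inj, hij]
      simp [Ne.symm this, Fin.val_inj, Ne.symm hij]
    · simp
  have hpne : ∀ d : {x : Fin n → F // x ≠ 0}, p d.1 ≠ 0 := by
    intro d h
    exact d.2 (funext fun j => by
      have := hcoeff d.1 j
      rw [h, Polynomial.coeff_zero] at this
      simpa using this.symm)
  have heval : ∀ (d : Fin n → F) (t : F), (p d).eval t = ∑ i, d i * t ^ ((i : ℕ) + 1) := by
    intro d t; rw [hp]; simp [Polynomial.eval_finset_sum]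
  set S : Set F := ({0} ∪ g ⁻¹' (Subtype.val '' D)) ∪ ⋃ d ∈ D, {t | (p d.1).IsRoot t} with hS
  have hSfin : S.Finite := by
    refine (Set.Finite.union (Set.Finite.union (Set.finite_singleton 0) ?_) ?_)
    · exact ((hinf.image _).preimage hginj.injOn)
    · exact hinf.biUnion fun d _ => Polynomial.finite_setOf_isRoot (hpne d)
  obtain ⟨t, ht⟩ := hSfin.infinite_compl.nonempty
  have ht0 : t ≠ 0 := fun h => ht (Or.inl (Or.inl (by simp [h])))
  have hgt : g t ≠ 0 := by
    intro h
    have := congrFun h ⟨0, hn⟩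
    simp [g] at this
    exact ht0 this
  have hvD : (⟨g t, hgt⟩ : {x : Fin n → F // x ≠ 0}) ∉ D := by
    intro h
    exact ht (Or.inl (Or.inr ⟨⟨g t, hgt⟩, h, rfl⟩))
  obtain ⟨d, hdD, hadj⟩ := hdom ⟨g t, hgt⟩ hvD
  have hroot : (p d.1).IsRoot t := by
    have h2 := hadj.2
    rw [Polynomial.IsRoot, heval]
    simpa [g, mul_comm] using h2
  exact ht (Or.inr (Set.mem_biUnion hdD hroot))
end

section
/- Let F be a finite field with q elements such that there exist a, b ∈ F with (a,b) ≠ (0,0) and a² + b² = 0, and let n ≥ 2. Then the clique number of TD(F,n) is at least q^{⌊n/2⌋} − 1; moreover, if n is odd, then the clique number of TD(F,n) is at least q^{⌊n/2⌋}. -/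
open SimpleGraph

lemma sum_two_mul' {M : Type*} [AddCommMonoid M] (g : ℕ → M) (m : ℕ) :
    ∑ k ∈ Finset.range (2*m), g k = ∑ j ∈ Finset.range m, (g (2*j) + g (2*j+1)) := by
  induction m with
  | zero => simp
  | succ m ih =>
      have : 2 * (m+1) = (2*m + 1) + 1 := by omega
      rw [this, Finset.sum_range_succ, Finset.sum_range_succ, ih, Finset.sum_range_succ]
      abel

noncomputable def bodyF {F : Type*} [Field F] (i : F) (m : ℕ) (t : Fin m → F) (k : ℕ) : F :=
  if h : k / 2 < m then (if k % 2 = 0 then t ⟨k/2, h⟩ else i * t ⟨k/2, h⟩) else 0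

lemma bodyF_even {F : Type*} [Field F] (i : F) (m : ℕ) (t : Fin m → F) (j : ℕ) (hj : j < m) :
    bodyF i m t (2*j) = t ⟨j, hj⟩ := by
  have h1 : (2*j)/2 = j := by omega
  have h2 : (2*j) % 2 = 0 := by omega
  simp [bodyF, h1, h2, hj]

lemma bodyF_odd {F : Type*} [Field F] (i : F) (m : ℕ) (t : Fin m → F) (j : ℕ) (hj : j < m) :
    bodyF i m t (2*j+1) = i * t ⟨j, hj⟩ := by
  have h1 : (2*j+1)/2 = j := by omega
  have h2 : (2*j+1) % 2 = 1 := by omega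
  simp [bodyF, h1, h2, hj]

lemma bodyF_big {F : Type*} [Field F] (i : F) (m : ℕ) (t : Fin m → F) (k : ℕ)
    (hk : 2*m ≤ k) : bodyF i m t k = 0 := by
  have : ¬ k/2 < m := by omega
  simp [bodyF, this]

lemma body_dot {F : Type*} [Field F] (i : F) (hi : i^2 = -1) (m n : ℕ) (h2 : 2*m ≤ n)
    (t s : Fin m → F) :
    ∑ k : Fin n, bodyF i m t k * bodyF i m s k = 0 := by
  rw [Fin.sum_univ_eq_sum_range (fun k => bodyF i m t k * bodyF i m s k)]
  rw [← Finset.sum_subset (Finset.range_subset_range.2 h2)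
    (fun k _ hk => by
      rw [bodyF_big i m t k (by simpa using (Finset.mem_range.not.1 hk : ¬ k < 2*m) |>
        (fun h => by omega))]
      ring)]
  · rw [sum_two_mul']
    apply Finset.sum_eq_zero
    intro j hj
    rw [Finset.mem_range] at hj
    rw [bodyF_even i m t j hj, bodyF_even i m s j hj, bodyF_odd i m t j hj,
      bodyF_odd i m s j hj]
    have : i * t ⟨j, hj⟩ * (i * s ⟨j, hj⟩) = i^2 * (t ⟨j, hj⟩ * s ⟨j, hj⟩) := by ring
    rw [this, hi]
    ring

/-- if a finite field `F` with `q` elements admits `(a,b) ≠ (0,0)` with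
`a² + b² = 0` and `n ≥ 2`, then the clique number of `TD(F,n)` is at least
`q^⌊n/2⌋ - 1`, and at least `q^⌊n/2⌋` when `n` is odd. -/
theorem stmt17 (F : Type*) [Field F] [Fintype F]
    (a b : F) (hab : (a, b) ≠ (0, 0)) (h : a ^ 2 + b ^ 2 = 0)
    (n : ℕ) (hn : 2 ≤ n) :
    (∃ s : Finset {x : Fin n → F // x ≠ 0},
        (TD F n).IsClique ↑s ∧ Fintype.card F ^ (n / 2) - 1 ≤ s.card) ∧
    (Odd n → ∃ s : Finset {x : Fin n → F // x ≠ 0},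
        (TD F n).IsClique ↑s ∧ Fintype.card F ^ (n / 2) ≤ s.card) := by
  classical
  -- a ≠ 0
  have ha : a ≠ 0 := by
    intro ha
    apply hab
    have : b ^ 2 = 0 := by rw [ha] at h; simpa using h
    have hb : b = 0 := by
      exact pow_eq_zero_iff (n := 2) (by norm_num) |>.1 this
    simp [ha, hb]
  set i : F := b / a with hidef
  have hi : i ^ 2 = -1 := by
    rw [hidef, div_pow, div_eq_iff (pow_ne_zero 2 ha)]
    linear_combination h
  set m := n / 2 with hm
  have h2m : 2 * m ≤ n := by omega
  have hmpos : 1 ≤ m := by omega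
  let fV : (Fin m → F) → (Fin n → F) := fun t k => bodyF i m t k
  have hval : ∀ (t : Fin m → F) (j : Fin m), fV t ⟨2*j.1, by omega⟩ = t j := by
    intro t j
    simpa [fV] using bodyF_even i m t j.1 j.2
  have hinj : Function.Injective fV := by
    intro t s hts
    funext j
    have := congr_fun hts ⟨2*j.1, by omega⟩
    rwa [hval, hval] at this
  have hnz : ∀ t : Fin m → F, t ≠ 0 → fV t ≠ 0 := by
    intro t ht h0
    apply ht
    have := hinj (a₁ := t) (a₂ := 0) ?_
    · exact this
    · funext k
      simp only [fV] at h0 ⊢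
      rw [congr_fun h0 k]
      simp [bodyF]
  have hdot : ∀ t s : Fin m → F, ∑ k : Fin n, fV t k * fV s k = 0 := by
    intro t s
    exact body_dot i hi m n h2m t s
  let emb : {t : Fin m → F // t ≠ 0} ↪ {x : Fin n → F // x ≠ 0} :=
    ⟨fun t => ⟨fV t.1, hnz t.1 t.2⟩, by
      intro t s hts
      exact Subtype.ext (hinj (congrArg Subtype.val hts))⟩
  let s0 : Finset {x : Fin n → F // x ≠ 0} := Finset.univ.map emb
  have hclique : (TD F n).IsClique ↑s0 := by
    intro x hx y hy hxy
    simp only [s0, Finset.coe_map, Set.mem_image, Finset.mem_coe, Finset.coe_univ,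
      Set.image_univ, Set.mem_range] at hx hy
    obtain ⟨t, rfl⟩ := hx
    obtain ⟨u, rfl⟩ := hy
    exact ⟨hxy, hdot t.1 u.1⟩
  have hcard : s0.card = Fintype.card F ^ m - 1 := by
    rw [Finset.card_map, Finset.card_univ]
    rw [show Fintype.card {t : Fin m → F // t ≠ 0}
        = Fintype.card (Fin m → F) - Fintype.card {t : Fin m → F // t = 0} from
      Fintype.card_subtype_compl _, Fintype.card_subtype_eq]
    congr 1
    simp [Fintype.card_fun]
  refine ⟨⟨s0, hclique, by rw [hcard]⟩, ?_⟩
  intro hodd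
  have hne : n = 2*m + 1 := by
    obtain ⟨r, hr⟩ := hodd
    omega
  let x0 : Fin n → F := fun k => if (k : ℕ) = 2*m then 1 else 0
  have hx0 : x0 ≠ 0 := by
    intro h0
    have := congr_fun h0 ⟨2*m, by omega⟩
    simp [x0] at this
  have hdot0 : ∀ t : Fin m → F, ∑ k : Fin n, fV t k * x0 k = 0 := by
    intro t
    apply Finset.sum_eq_zero
    intro k _
    by_cases hk : (k : ℕ) = 2*m
    · have : fV t k = 0 := bodyF_big i m t k (by omega)
      simp [this]
    · simp [x0, hk]
  have hnotmem : (⟨x0, hx0⟩ : {x : Fin n → F // x ≠ 0}) ∉ s0 := by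
    intro hmem
    simp only [s0, Finset.mem_map] at hmem
    obtain ⟨t, _, ht⟩ := hmem
    have : fV t.1 = x0 := congrArg Subtype.val ht
    have h4 := congr_fun this ⟨2*m, by omega⟩
    have hz : fV t.1 ⟨2*m, by omega⟩ = 0 := bodyF_big i m t.1 (2*m) le_rfl
    rw [hz] at h4
    simp [x0] at h4
  refine ⟨insert ⟨x0, hx0⟩ s0, ?_, ?_⟩
  · rw [Finset.coe_insert]
    apply hclique.insert
    intro y hy hyne
    have hy' := hy
    simp only [s0, Finset.coe_map, Finset.coe_univ, Set.image_univ, Set.mem_range] at hy'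
    obtain ⟨t, rfl⟩ := hy'
    constructor
    · exact fun hh => hyne (hh ▸ rfl)
    · have := hdot0 t.1
      calc ∑ k : Fin n, x0 k * fV t.1 k = ∑ k : Fin n, fV t.1 k * x0 k := by
            simp [mul_comm]
        _ = 0 := this
  · rw [Finset.card_insert_of_notMem hnotmem, hcard]
    have hq : 1 ≤ Fintype.card F ^ m := Nat.one_le_pow _ _ Fintype.card_pos
    omega
end

section
/- Let R be a commutative ring with nonzero identity such that there exist a, b ∈ R with (a,b) ≠ (0,0) and a² + b² = 0, and let n ≥ 2. Then the clique number of TD(R,n) is at least 2^{⌊n/2⌋} − 1; moreover, if n is odd, then the clique number of TD(R,n) is at least 2^{⌊n/2⌋}. -/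
open SimpleGraph

section Aux

variable {R : Type*} [CommRing R] (a b : R) (n m : ℕ)

/-- The vector associated to a subset `S ⊆ Fin m`: on the coordinate pair `(2i, 2i+1)`
it is `(a, b)` if `i ∈ S` and `(0,0)` otherwise; any leftover coordinate is `0`. -/
def vv (S : Finset (Fin m)) : Fin n → R :=
  fun j => if h : j.val / 2 < m then
    (if (⟨j.val / 2, h⟩ : Fin m) ∈ S then (if j.val % 2 = 0 then a else b) else 0)
  else 0

lemma vv_coord (S : Finset (Fin m)) (i : Fin m) (k : ℕ) (hk : k < 2)
    (hj : 2 * i.val + k < n) :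
    vv a b n m S ⟨2 * i.val + k, hj⟩ =
      if i ∈ S then (if k = 0 then a else b) else 0 := by
  unfold vv
  simp only [show (2 * i.val + k) / 2 = i.val from by omega,
    show (2 * i.val + k) % 2 = k from by omega, dif_pos i.isLt, Fin.eta]

lemma vv_top (S : Finset (Fin m)) (hj : 2 * m < n) :
    vv a b n m S ⟨2 * m, hj⟩ = 0 := by
  unfold vv
  simp only [show (2 * m) / 2 = m from by omega]
  rw [dif_neg (lt_irrefl m)]

lemma vv_dot (h : a ^ 2 + b ^ 2 = 0) (hmn : 2 * m ≤ n) (S T : Finset (Fin m)) :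
    ∑ j : Fin n, vv a b n m S j * vv a b n m T j = 0 := by
  classical
  set e : Fin m × Fin 2 → Fin n :=
    fun p => ⟨2 * p.1.val + p.2.val, by have h1 := p.1.isLt; have h2 := p.2.isLt; omega⟩
    with he
  have hinj : Function.Injective e := by
    intro p q hpq
    have h1 := p.1.isLt; have h2 := p.2.isLt; have h3 := q.1.isLt; have h4 := q.2.isLt
    have hv : 2 * p.1.val + p.2.val = 2 * q.1.val + q.2.val := congrArg Fin.val hpq
    rw [Prod.ext_iff]
    constructor <;> (apply Fin.ext; omega)
  have hsub : ∀ j : Fin n, j ∉ Finset.univ.image e →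
      vv a b n m S j * vv a b n m T j = 0 := by
    intro j hj
    have hlt : ¬ j.val / 2 < m := by
      intro hlt
      apply hj
      refine Finset.mem_image.mpr ⟨(⟨j.val / 2, hlt⟩, ⟨j.val % 2, by omega⟩),
        Finset.mem_univ _, ?_⟩
      apply Fin.ext
      simp only [he]
      omega
    simp [vv, hlt]
  have h1 : ∑ j : Fin n, vv a b n m S j * vv a b n m T j
      = ∑ j ∈ Finset.univ.image e, vv a b n m S j * vv a b n m T j :=
    (Finset.sum_subset (Finset.subset_univ _) (fun j _ hj => hsub j hj)).symm
  rw [h1, Finset.sum_image (fun p _ q _ hpq => hinj hpq)]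
  rw [Fintype.sum_prod_type]
  apply Finset.sum_eq_zero
  intro i _
  have hterm : ∀ k : Fin 2, vv a b n m S (e (i, k)) * vv a b n m T (e (i, k))
      = (if i ∈ S then (if k.val = 0 then a else b) else 0) *
        (if i ∈ T then (if k.val = 0 then a else b) else 0) := by
    intro k
    rw [show e (i, k) = ⟨2 * i.val + k.val, by have := i.isLt; have := k.isLt; omega⟩
      from rfl]
    rw [vv_coord a b n m S i k.val k.isLt, vv_coord a b n m T i k.val k.isLt]
  rw [Fin.sum_univ_two, hterm 0, hterm 1]
  by_cases hS : i ∈ S <;> by_cases hT : i ∈ T <;> simp [hS, hT]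
  linear_combination h

lemma vv_ne_zero (hab : (a, b) ≠ (0, 0)) (hmn : 2 * m ≤ n) (S : Finset (Fin m))
    (hS : S.Nonempty) : vv a b n m S ≠ 0 := by
  obtain ⟨i, hi⟩ := hS
  intro h0
  have ha := congrFun h0 ⟨2 * i.val + 0, by have := i.isLt; omega⟩
  have hb := congrFun h0 ⟨2 * i.val + 1, by have := i.isLt; omega⟩
  rw [vv_coord a b n m S i 0 (by omega)] at ha
  rw [vv_coord a b n m S i 1 (by omega)] at hb
  simp [hi] at ha hb
  exact hab (by simp [ha, hb])

lemma vv_inj (hab : (a, b) ≠ (0, 0)) (hmn : 2 * m ≤ n) {S T : Finset (Fin m)}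
    (hST : S ≠ T) : vv a b n m S ≠ vv a b n m T := by
  intro h0
  have hex : ∃ i, ¬ (i ∈ S ↔ i ∈ T) := by
    by_contra hc
    push_neg at hc
    exact hST (Finset.ext fun i => hc i)
  obtain ⟨i, hi⟩ := hex
  have ha := congrFun h0 ⟨2 * i.val + 0, by have := i.isLt; omega⟩
  have hb := congrFun h0 ⟨2 * i.val + 1, by have := i.isLt; omega⟩
  rw [vv_coord a b n m S i 0 (by omega), vv_coord a b n m T i 0 (by omega)] at ha
  rw [vv_coord a b n m S i 1 (by omega), vv_coord a b n m T i 1 (by omega)] at hb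
  by_cases hS : i ∈ S <;> by_cases hT : i ∈ T <;>
    simp [hS, hT] at ha hb hi ⊢
  · exact hab (by simp [ha, hb])
  · exact hab (by simp [ha.symm, hb.symm])

end Aux

/-- if a commutative ring `R` with nonzero identity admits `(a,b) ≠ (0,0)`
with `a² + b² = 0` and `n ≥ 2`, then the clique number of `TD(R,n)` is at least
`2^⌊n/2⌋ - 1`, and at least `2^⌊n/2⌋` when `n` is odd. -/
theorem stmt18 (R : Type*) [CommRing R] [Nontrivial R]
    (a b : R) (hab : (a, b) ≠ (0, 0)) (h : a ^ 2 + b ^ 2 = 0)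
    (n : ℕ) (hn : 2 ≤ n) :
    (∃ s : Finset {x : Fin n → R // x ≠ 0},
        (TD R n).IsClique ↑s ∧ 2 ^ (n / 2) - 1 ≤ s.card) ∧
    (Odd n → ∃ s : Finset {x : Fin n → R // x ≠ 0},
        (TD R n).IsClique ↑s ∧ 2 ^ (n / 2) ≤ s.card) := by
  classical
  set m := n / 2 with hm
  have hmn : 2 * m ≤ n := by omega
  set D : Finset (Finset (Fin m)) := Finset.univ.erase ∅ with hD
  have hne : ∀ S ∈ D, S.Nonempty := by
    intro S hS
    exact Finset.nonempty_iff_ne_empty.mpr (Finset.mem_erase.mp hS).1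
  set f : {S // S ∈ D} → {x : Fin n → R // x ≠ 0} :=
    fun S => ⟨vv a b n m S.1, vv_ne_zero a b n m hab hmn S.1 (hne S.1 S.2)⟩ with hf
  have hfinj : Function.Injective f := by
    intro S T hST
    have : vv a b n m S.1 = vv a b n m T.1 := congrArg Subtype.val hST
    apply Subtype.ext
    by_contra hne'
    exact vv_inj a b n m hab hmn hne' this
  set s1 : Finset {x : Fin n → R // x ≠ 0} := D.attach.image f with hs1
  have hmem : ∀ x ∈ s1, ∃ S : {S // S ∈ D}, f S = x := by
    intro x hx
    obtain ⟨S, _, hSx⟩ := Finset.mem_image.mp hx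
    exact ⟨S, hSx⟩
  have hclique1 : (TD R n).IsClique ↑s1 := by
    intro x hx y hy hxy
    obtain ⟨S, hS⟩ := hmem x hx
    obtain ⟨T, hT⟩ := hmem y hy
    refine ⟨hxy, ?_⟩
    rw [← hS, ← hT]
    exact vv_dot a b n m h hmn S.1 T.1
  have hcard1 : s1.card = 2 ^ m - 1 := by
    rw [hs1, Finset.card_image_of_injective _ hfinj, Finset.card_attach, hD,
      Finset.card_erase_of_mem (Finset.mem_univ _), Finset.card_univ]
    simp
  constructor
  · exact ⟨s1, hclique1, by rw [hcard1]⟩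
  · intro hodd
    have hmn' : 2 * m + 1 = n := by
      obtain ⟨k, hk⟩ := hodd
      omega
    have hw0 : (fun j : Fin n => if j.val = 2 * m then (1 : R) else 0) ≠ 0 := by
      intro h0
      have := congrFun h0 ⟨2 * m, by omega⟩
      simp at this
    set w : {x : Fin n → R // x ≠ 0} :=
      ⟨fun j => if j.val = 2 * m then (1 : R) else 0, hw0⟩ with hw
    have hwval : ∀ S : Finset (Fin m), ∑ j : Fin n, w.1 j * vv a b n m S j = 0 := by
      intro S
      apply Finset.sum_eq_zero
      intro j _
      by_cases hj : j.val = 2 * m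
      · have hj' : j = ⟨2 * m, by omega⟩ := Fin.ext hj
        rw [hj', vv_top a b n m S (by omega), mul_zero]
      · simp [hw, hj]
    have hwns1 : w ∉ s1 := by
      intro hmemw
      obtain ⟨S, hS⟩ := hmem w hmemw
      have := congrArg (fun x => x.1 ⟨2 * m, by omega⟩) hS
      simp only [hf, hw] at this
      rw [vv_top a b n m S.1 (by omega)] at this
      simp at this
    refine ⟨insert w s1, ?_, ?_⟩
    · intro x hx y hy hxy
      simp only [Finset.coe_insert, Set.mem_insert_iff, Finset.mem_coe] at hx hy
      rcases hx with hx | hx <;> rcases hy with hy | hy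
      · exact absurd (hx.trans hy.symm) hxy
      · obtain ⟨T, hT⟩ := hmem y hy
        subst hx
        refine ⟨hxy, ?_⟩
        rw [← hT]
        exact hwval T.1
      · obtain ⟨S, hS⟩ := hmem x hx
        subst hy
        refine ⟨hxy, ?_⟩
        rw [← hS]
        simp only [hf]
        rw [show ∑ j : Fin n, vv a b n m S.1 j * w.1 j
          = ∑ j : Fin n, w.1 j * vv a b n m S.1 j from
            Finset.sum_congr rfl fun j _ => mul_comm _ _]
        exact hwval S.1
      · exact hclique1 hx hy hxy
    · rw [Finset.card_insert_of_notMem hwns1, hcard1]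
      have : 1 ≤ 2 ^ m := Nat.one_le_two_pow
      omega
end

section
/- Let F be a finite field with q elements such that there exist a, b ∈ F with (a,b) ≠ (0,0) and a² + b² = 0, and let n ≥ 1. Then the maximum cardinality of a subset S of F^n such that u·v = 0 for all u, v ∈ S (including u = v) equals q^{⌊n/2⌋}: there exists such a set of cardinality q^{⌊n/2⌋}, and every such set has cardinality at most q^{⌊n/2⌋}. -/
open Module Finset

private noncomputable def dotForm (F : Type*) [Field F] (n : ℕ) :
    LinearMap.BilinForm F (Fin n → F) :=
  LinearMap.mk₂ F (fun u v => ∑ i, u i * v i)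
    (fun u u' v => by simp [add_mul, Finset.sum_add_distrib])
    (fun c u v => by simp [Finset.mul_sum, mul_assoc])
    (fun u v v' => by simp [mul_add, Finset.sum_add_distrib])
    (fun c u v => by simp [Finset.mul_sum, mul_left_comm])

private lemma dotForm_apply (F : Type*) [Field F] (n : ℕ) (u v : Fin n → F) :
    dotForm F n u v = ∑ i, u i * v i := rfl

private lemma dotForm_refl (F : Type*) [Field F] (n : ℕ) : (dotForm F n).IsRefl := by
  intro u v huv
  rw [dotForm_apply] at huv ⊢
  simpa [mul_comm] using huv

private lemma dotForm_nondeg (F : Type*) [Field F] (n : ℕ) : (dotForm F n).Nondegenerate := by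
  refine (dotForm_refl F n).nondegenerate_iff_separatingLeft.mpr ?_
  intro u hu
  funext j
  have := hu (Pi.single j 1)
  rw [dotForm_apply] at this
  simpa [Pi.single_apply, mul_ite, Finset.sum_ite_eq'] using this

/-- if a finite field `F` with `q` elements admits `(a,b) ≠ (0,0)` with
`a² + b² = 0`, then the maximum size of a set `S ⊆ F^n` of pairwise orthogonal,
self-orthogonal vectors is exactly `q^⌊n/2⌋`. -/
theorem stmt19 (F : Type*) [Field F] [Fintype F]
    (a b : F) (hab : (a, b) ≠ (0, 0)) (h : a ^ 2 + b ^ 2 = 0)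
    (n : ℕ) (hn : 1 ≤ n) :
    (∃ S : Finset (Fin n → F),
        (∀ u ∈ S, ∀ v ∈ S, ∑ i, u i * v i = 0) ∧
        S.card = Fintype.card F ^ (n / 2)) ∧
    (∀ S : Finset (Fin n → F),
        (∀ u ∈ S, ∀ v ∈ S, ∑ i, u i * v i = 0) →
        S.card ≤ Fintype.card F ^ (n / 2)) := by
  classical
  have ha : a ≠ 0 := by
    rintro rfl
    have hb : b = 0 := pow_eq_zero_iff (n := 2) (by norm_num) |>.mp (by linear_combination h)
    exact hab (by simp [hb])
  set i : F := b * a⁻¹ with hidef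
  have hi : i ^ 2 = -1 := by
    field_simp [hidef]
    linear_combination a⁻¹ ^ 2 * h - (1 + a * a⁻¹) * mul_inv_cancel₀ ha
  set m := n / 2 with hm
  have h2m : m + m ≤ n := by omega
  constructor
  · -- existence
    set g : (Fin m → F) → ℕ → F := fun x j =>
      if h1 : j < m then x ⟨j, h1⟩ else if h2 : j - m < m then i * x ⟨j - m, h2⟩ else 0 with hg
    set f : (Fin m → F) → (Fin n → F) := fun x j => g x j.val with hf
    have hfinj : Function.Injective f := by
      intro x y hxy
      funext k
      have hk : (k : ℕ) < n := lt_of_lt_of_le k.2 (by omega)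
      have := congrFun hxy ⟨k, hk⟩
      simpa [hf, hg, k.2] using this
    refine ⟨Finset.univ.image f, ?_, ?_⟩
    · intro u hu v hv
      obtain ⟨x, -, rfl⟩ := Finset.mem_image.mp hu
      obtain ⟨y, -, rfl⟩ := Finset.mem_image.mp hv
      have key : ∀ z : Fin m → F, ∀ j : Fin n, f z j = g z j.val := fun _ _ => rfl
      calc (∑ j : Fin n, f x j * f y j)
          = ∑ j ∈ Finset.range n, g x j * g y j := by
            rw [Fin.sum_univ_eq_sum_range (fun j => g x j * g y j) n]
        _ = ∑ j ∈ Finset.Ico 0 (m + m), g x j * g y j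
              + ∑ j ∈ Finset.Ico (m + m) n, g x j * g y j := by
            rw [Finset.range_eq_Ico, ← Finset.sum_Ico_consecutive _ (Nat.zero_le _) h2m]
        _ = ∑ j ∈ Finset.Ico 0 (m + m), g x j * g y j := by
            have hz : ∑ j ∈ Finset.Ico (m + m) n, g x j * g y j = 0 := by
              apply Finset.sum_eq_zero
              intro j hj
              rw [Finset.mem_Ico] at hj
              simp only [hg, dif_neg (show ¬ j < m by omega),
                dif_neg (show ¬ j - m < m by omega), zero_mul]
            rw [hz, add_zero]
        _ = ∑ j ∈ Finset.Ico 0 m, g x j * g y j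
              + ∑ j ∈ Finset.Ico m (m + m), g x j * g y j := by
            rw [← Finset.sum_Ico_consecutive _ (Nat.zero_le _) (Nat.le_add_right m m)]
        _ = ∑ j ∈ Finset.range m, g x j * g y j
              + ∑ j ∈ Finset.range m, g x (m + j) * g y (m + j) := by
            rw [Finset.sum_Ico_eq_sum_range, Finset.sum_Ico_eq_sum_range]
            simp only [Nat.sub_zero, Nat.zero_add, Nat.add_sub_cancel_left]
        _ = ∑ j ∈ Finset.range m, (g x j * g y j + g x (m + j) * g y (m + j)) := by
            rw [Finset.sum_add_distrib]
        _ = 0 := by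
            apply Finset.sum_eq_zero
            intro j hj
            rw [Finset.mem_range] at hj
            simp only [hg, dif_pos hj, dif_neg (show ¬ m + j < m by omega),
              dif_pos (show m + j - m < m by omega)]
            have : (i * x ⟨m + j - m, by omega⟩) * (i * y ⟨m + j - m, by omega⟩)
                = i ^ 2 * (x ⟨m + j - m, by omega⟩ * y ⟨m + j - m, by omega⟩) := by ring
            rw [this, hi]
            have he : m + j - m = j := by omega
            have hx' : x ⟨m + j - m, by omega⟩ = x ⟨j, hj⟩ := by congr 1; exact Fin.ext he
            have hy' : y ⟨m + j - m, by omega⟩ = y ⟨j, hj⟩ := by congr 1; exact Fin.ext he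
            rw [hx', hy']
            ring
    · rw [Finset.card_image_of_injective _ hfinj, Finset.card_univ]
      simp [Fintype.card_fun]
  · -- upper bound
    intro S hS
    set B := dotForm F n with hB
    set W := Submodule.span F (S : Set (Fin n → F)) with hW
    have key1 : ∀ u ∈ S, ∀ v ∈ W, B u v = 0 := by
      intro u hu v hv
      have : W ≤ LinearMap.ker (B u) := by
        rw [Submodule.span_le]
        intro w hw
        simp only [SetLike.mem_coe, LinearMap.mem_ker]
        rw [hB, dotForm_apply]
        exact hS u hu w hw
      simpa using this hv
    have key2 : ∀ w ∈ W, ∀ v ∈ W, B w v = 0 := by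
      intro w hw v hv
      have : W ≤ LinearMap.ker (B.flip v) := by
        rw [Submodule.span_le]
        intro u hu
        simp only [SetLike.mem_coe, LinearMap.mem_ker, LinearMap.flip_apply]
        exact key1 u hu v hv
      simpa using this hw
    have hWle : W ≤ B.orthogonal W := by
      intro v hv
      rw [LinearMap.BilinForm.mem_orthogonal_iff]
      intro w hw
      exact key2 w hw v hv
    have hfr := LinearMap.BilinForm.finrank_add_finrank_orthogonal (B := B)
      (dotForm_refl F n) W
    rw [LinearMap.BilinForm.orthogonal_top_eq_bot (dotForm_nondeg F n)] at hfr
    rw [inf_bot_eq, finrank_bot, add_zero] at hfr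
    have hdim : finrank F (Fin n → F) = n := by simp
    have hle : finrank F W ≤ finrank F (B.orthogonal W) :=
      Submodule.finrank_mono hWle
    have hWfr : finrank F W ≤ m := by
      rw [hm]
      rw [Nat.le_div_iff_mul_le (by norm_num)]
      omega
    have hsub : S ⊆ (W : Set (Fin n → F)).toFinset := by
      intro x hx
      rw [Set.mem_toFinset]
      exact Submodule.subset_span hx
    calc S.card ≤ (W : Set (Fin n → F)).toFinset.card := Finset.card_le_card hsub
      _ = Fintype.card W := by
          rw [Set.toFinset_card]; exact Fintype.card_congr (Equiv.refl _)
      _ = Fintype.card F ^ finrank F W := card_eq_pow_finrank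
      _ ≤ Fintype.card F ^ m := Nat.pow_le_pow_right Fintype.card_pos hWfr
end
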